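/- arXiv:math/0506094 — 13 statements merged into one kernel-verified Lean document; each statement's English description precedes it below -/
import Mathlib

section
/- Let A be a commutative local principal ideal ring, let n = n₁ + n₂, and let B ⊆ GL_n(A) be the subgroup of invertible upper triangular matrices. Suppose α and α' are block matrices of the form α = [[0, α₁],[α₂, 0]] and α' = [[0, α₁'],[α₂', 0]] with α₁, α₁' ∈ GL_{n₁}(A) and α₂, α₂' ∈ GL_{n₂}(A) (so the upper-left block is n₁×n₂). Then α and α' lie in the same double coset BαB = Bα'B if and only if α₁ and α₁' lie in the same double coset of upper triangular matrices in GL_{n₁}(A), and α₂ and α₂' lie in the same double coset of upper triangular matrices in GL_{n₂}(A). -/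
open Matrix

/-- A matrix is invertible upper triangular. -/
def IsUT {A : Type*} [CommRing A] {n : ℕ} (M : Matrix (Fin n) (Fin n) A) : Prop :=
  M.BlockTriangular id ∧ IsUnit M

/-- Two matrices lie in the same double coset for the subgroup of invertible
upper triangular matrices. -/
def SameDC {A : Type*} [CommRing A] {n : ℕ} (α α' : Matrix (Fin n) (Fin n) A) : Prop :=
  ∃ b c : Matrix (Fin n) (Fin n) A, IsUT b ∧ IsUT c ∧ b * α * c = α'

/-- The `n×n` matrix `[[X₁, α₁],[α₂, X₂]]` with upper-left block of size `n₁ × n₂`. -/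
def blk {A : Type*} [CommRing A] {n₁ n₂ : ℕ} (X₁ : Matrix (Fin n₁) (Fin n₂) A)
    (α₁ : Matrix (Fin n₁) (Fin n₁) A) (α₂ : Matrix (Fin n₂) (Fin n₂) A)
    (X₂ : Matrix (Fin n₂) (Fin n₁) A) : Matrix (Fin (n₁ + n₂)) (Fin (n₁ + n₂)) A :=
  Matrix.reindex finSumFinEquiv (finSumFinEquiv.trans (finCongr (Nat.add_comm n₂ n₁)))
    (Matrix.fromBlocks X₁ α₁ α₂ X₂)

section Aux

variable {A : Type*} [CommRing A]

/-- An equiv `Fin m ⊕ Fin k ≃ Fin N` is *standard* if it sends `inl i` to `i` and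
`inr j` to `m + j` (as natural number values). -/
def StdEquiv {m k N : ℕ} (e : Fin m ⊕ Fin k ≃ Fin N) : Prop :=
  (∀ i : Fin m, ((e (Sum.inl i)) : ℕ) = i) ∧ (∀ j : Fin k, ((e (Sum.inr j)) : ℕ) = m + j)

lemma stdEquiv_r (n₁ n₂ : ℕ) :
    StdEquiv (finSumFinEquiv : Fin n₁ ⊕ Fin n₂ ≃ Fin (n₁ + n₂)) := by
  constructor <;> intro i <;> simp

lemma stdEquiv_u (n₁ n₂ : ℕ) :
    StdEquiv ((finSumFinEquiv.trans (finCongr (Nat.add_comm n₂ n₁))) :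
      Fin n₂ ⊕ Fin n₁ ≃ Fin (n₁ + n₂)) := by
  constructor <;> intro i <;> simp <;> omega

lemma blockTriangular_iff_std {m k N : ℕ} {e : Fin m ⊕ Fin k ≃ Fin N} (he : StdEquiv e)
    (b : Matrix (Fin N) (Fin N) A) :
    b.BlockTriangular id ↔
      ((b.submatrix e e).toBlocks₁₁.BlockTriangular id ∧
       (b.submatrix e e).toBlocks₂₂.BlockTriangular id ∧
       (b.submatrix e e).toBlocks₂₁ = 0) := by
  obtain ⟨hl, hr⟩ := he
  constructor
  · intro h
    refine ⟨?_, ?_, ?_⟩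
    · intro i j hij
      exact h (show (id (e (Sum.inl j)) : Fin N) < id (e (Sum.inl i)) by
        simp only [id_eq, Fin.lt_def, hl]; exact_mod_cast hij)
    · intro i j hij
      exact h (show (id (e (Sum.inr j)) : Fin N) < id (e (Sum.inr i)) by
        simp only [id_eq, Fin.lt_def, hr]
        have : (j : ℕ) < i := hij
        omega)
    · ext i j
      exact h (show (id (e (Sum.inl j)) : Fin N) < id (e (Sum.inr i)) by
        simp only [id_eq, Fin.lt_def, hl, hr]
        omega)
  · rintro ⟨h11, h22, h21⟩ i j hij
    obtain ⟨p, rfl⟩ : ∃ p, e p = i := ⟨e.symm i, e.apply_symm_apply i⟩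
    obtain ⟨q, rfl⟩ : ∃ q, e q = j := ⟨e.symm j, e.apply_symm_apply j⟩
    have hij' : ((e q : Fin N) : ℕ) < ((e p : Fin N) : ℕ) := hij
    rcases p with p | p <;> rcases q with q | q
    · have heq : b (e (Sum.inl p)) (e (Sum.inl q)) = (b.submatrix e e).toBlocks₁₁ p q := rfl
      rw [heq]
      refine h11 ?_
      have := hl p; have := hl q
      show (q : ℕ) < p
      omega
    · have := hl p; have := hr q; omega
    · have heq : b (e (Sum.inr p)) (e (Sum.inl q)) = (b.submatrix e e).toBlocks₂₁ p q := rfl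
      rw [heq, h21]; rfl
    · have heq : b (e (Sum.inr p)) (e (Sum.inr q)) = (b.submatrix e e).toBlocks₂₂ p q := rfl
      rw [heq]
      refine h22 ?_
      have := hr p; have := hr q
      show (q : ℕ) < p
      omega

lemma myIsUnit_submatrix_equiv {N : ℕ} {I : Type*} [Fintype I] [DecidableEq I]
    (e : I ≃ Fin N) (b : Matrix (Fin N) (Fin N) A) :
    IsUnit b ↔ IsUnit (b.submatrix e e) := by
  rw [Matrix.isUnit_iff_isUnit_det, Matrix.isUnit_iff_isUnit_det,
    Matrix.det_submatrix_equiv_self]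

lemma myIsUnit_fromBlocks_zero₂₁ {m k : ℕ} {M₁₁ : Matrix (Fin m) (Fin m) A}
    {M₁₂ : Matrix (Fin m) (Fin k) A} {M₂₂ : Matrix (Fin k) (Fin k) A} :
    IsUnit (Matrix.fromBlocks M₁₁ M₁₂ 0 M₂₂) ↔ IsUnit M₁₁ ∧ IsUnit M₂₂ := by
  rw [Matrix.isUnit_iff_isUnit_det, Matrix.det_fromBlocks_zero₂₁,
    Matrix.isUnit_iff_isUnit_det, Matrix.isUnit_iff_isUnit_det]
  exact ⟨fun h => ⟨isUnit_of_mul_isUnit_left h, isUnit_of_mul_isUnit_right h⟩,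
    fun h => h.1.mul h.2⟩

lemma reindex_eq_transfer {N : ℕ} {I J : Type*} [Fintype I] [Fintype J]
    [DecidableEq I] [DecidableEq J] (e : I ≃ Fin N) (f : J ≃ Fin N)
    (b c : Matrix (Fin N) (Fin N) A) (F F' : Matrix I J A) :
    b * (Matrix.reindex e f F) * c = Matrix.reindex e f F' ↔
      (b.submatrix e e) * F * (c.submatrix f f) = F' := by
  have hb : b = (b.submatrix ⇑e ⇑e).submatrix ⇑e.symm ⇑e.symm := by
    ext i j; simp
  have hc : c = (c.submatrix ⇑f ⇑f).submatrix ⇑f.symm ⇑f.symm := by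
    ext i j; simp
  have key : b * (Matrix.reindex e f F) * c =
      Matrix.reindex e f ((b.submatrix e e) * F * (c.submatrix f f)) := by
    rw [Matrix.reindex_apply, Matrix.reindex_apply]
    conv_lhs => rw [hb, hc]
    rw [Matrix.submatrix_mul_equiv, Matrix.submatrix_mul_equiv]
  rw [key]
  exact ⟨fun h => (Matrix.reindex e f).injective h, fun h => by rw [h]⟩

end Aux

theorem stmt0 {A : Type*} [CommRing A] [IsLocalRing A] [IsPrincipalIdealRing A]
    {n₁ n₂ : ℕ} (α₁ α₁' : Matrix (Fin n₁) (Fin n₁) A) (α₂ α₂' : Matrix (Fin n₂) (Fin n₂) A)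
    (h₁ : IsUnit α₁) (h₁' : IsUnit α₁') (h₂ : IsUnit α₂) (h₂' : IsUnit α₂') :
    SameDC (blk 0 α₁ α₂ 0) (blk 0 α₁' α₂' 0) ↔ SameDC α₁ α₁' ∧ SameDC α₂ α₂' := by
  set r : Fin n₁ ⊕ Fin n₂ ≃ Fin (n₁ + n₂) := finSumFinEquiv with hrdef
  set u : Fin n₂ ⊕ Fin n₁ ≃ Fin (n₁ + n₂) :=
    finSumFinEquiv.trans (finCongr (Nat.add_comm n₂ n₁)) with hudef
  have hru : StdEquiv r := stdEquiv_r n₁ n₂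
  have huu : StdEquiv u := stdEquiv_u n₁ n₂
  have hblk : ∀ (β₁ : Matrix (Fin n₁) (Fin n₁) A) (β₂ : Matrix (Fin n₂) (Fin n₂) A),
      blk 0 β₁ β₂ 0 = Matrix.reindex r u (Matrix.fromBlocks 0 β₁ β₂ 0) := fun _ _ => rfl
  constructor
  · rintro ⟨b, c, hb, hc, h⟩
    rw [hblk, hblk, reindex_eq_transfer] at h
    set B := b.submatrix ⇑r ⇑r with hBdef
    set C := c.submatrix ⇑u ⇑u with hCdef
    obtain ⟨hB11, hB22, hB21⟩ := (blockTriangular_iff_std hru b).mp hb.1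
    obtain ⟨hC11, hC22, hC21⟩ := (blockTriangular_iff_std huu c).mp hc.1
    have hBu : IsUnit B := (myIsUnit_submatrix_equiv r b).mp hb.2
    have hCu : IsUnit C := (myIsUnit_submatrix_equiv u c).mp hc.2
    have hBblocks : B = Matrix.fromBlocks B.toBlocks₁₁ B.toBlocks₁₂ 0 B.toBlocks₂₂ := by
      rw [← hB21, Matrix.fromBlocks_toBlocks]
    have hCblocks : C = Matrix.fromBlocks C.toBlocks₁₁ C.toBlocks₁₂ 0 C.toBlocks₂₂ := by
      rw [← hC21, Matrix.fromBlocks_toBlocks]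
    rw [hBblocks] at hBu
    rw [hCblocks] at hCu
    obtain ⟨hB11u, hB22u⟩ := myIsUnit_fromBlocks_zero₂₁.mp hBu
    obtain ⟨hC11u, hC22u⟩ := myIsUnit_fromBlocks_zero₂₁.mp hCu
    rw [hBblocks, hCblocks] at h
    rw [Matrix.fromBlocks_multiply, Matrix.fromBlocks_multiply] at h
    -- extract the four block equations
    have h11 := congrArg Matrix.toBlocks₁₁ h
    have h12 := congrArg Matrix.toBlocks₁₂ h
    have h21 := congrArg Matrix.toBlocks₂₁ h
    have h22 := congrArg Matrix.toBlocks₂₂ h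
    simp only [Matrix.toBlocks_fromBlocks₁₁, Matrix.toBlocks_fromBlocks₁₂,
      Matrix.toBlocks_fromBlocks₂₁, Matrix.toBlocks_fromBlocks₂₂,
      Matrix.mul_zero, Matrix.zero_mul, zero_add, add_zero,
      Matrix.zero_mul, Matrix.mul_zero] at h11 h12 h21 h22
    -- h11 : (B₁₂ * α₂) * C₁₁ + _ = 0, etc.
    -- First show B₁₂ = 0
    have hB12 : B.toBlocks₁₂ = 0 := by
      obtain ⟨V, hV⟩ := h₂.mul hC11u
      have h0 : B.toBlocks₁₂ * (α₂ * C.toBlocks₁₁) = 0 := by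
        rw [← Matrix.mul_assoc]; exact h11
      calc B.toBlocks₁₂ = B.toBlocks₁₂ * (α₂ * C.toBlocks₁₁) * (↑V⁻¹ : Matrix (Fin n₂) (Fin n₂) A) := by
            rw [← hV, Matrix.mul_assoc, Units.mul_inv, Matrix.mul_one]
        _ = 0 := by rw [h0, Matrix.zero_mul]
    have hC12 : C.toBlocks₁₂ = 0 := by
      obtain ⟨W, hW⟩ := hB22u.mul h₂
      calc C.toBlocks₁₂ = (↑W⁻¹ : Matrix (Fin n₂) (Fin n₂) A) * (B.toBlocks₂₂ * α₂ * C.toBlocks₁₂) := by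
            rw [← Matrix.mul_assoc, ← hW, Units.inv_mul, Matrix.one_mul]
        _ = 0 := by rw [h22, Matrix.mul_zero]
    constructor
    · refine ⟨B.toBlocks₁₁, C.toBlocks₂₂, ⟨hB11, hB11u⟩, ⟨hC22, hC22u⟩, ?_⟩
      have := h12
      rw [hB12] at this
      simpa using this
    · exact ⟨B.toBlocks₂₂, C.toBlocks₁₁, ⟨hB22, hB22u⟩, ⟨hC11, hC11u⟩, by simpa using h21⟩
  · rintro ⟨⟨b₁, c₁, hb₁, hc₁, e₁⟩, ⟨b₂, c₂, hb₂, hc₂, e₂⟩⟩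
    refine ⟨Matrix.reindex r r (Matrix.fromBlocks b₁ 0 0 b₂),
      Matrix.reindex u u (Matrix.fromBlocks c₂ 0 0 c₁), ⟨?_, ?_⟩, ⟨?_, ?_⟩, ?_⟩
    · rw [blockTriangular_iff_std hru]
      have : (Matrix.reindex r r (Matrix.fromBlocks b₁ 0 0 b₂)).submatrix ⇑r ⇑r =
          Matrix.fromBlocks b₁ 0 0 b₂ := by
        ext i j; simp
      rw [this]
      exact ⟨hb₁.1, hb₂.1, rfl⟩
    · rw [myIsUnit_submatrix_equiv r]
      have : (Matrix.reindex r r (Matrix.fromBlocks b₁ 0 0 b₂)).submatrix ⇑r ⇑r =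
          Matrix.fromBlocks b₁ 0 0 b₂ := by
        ext i j; simp
      rw [this]
      exact myIsUnit_fromBlocks_zero₂₁.mpr ⟨hb₁.2, hb₂.2⟩
    · rw [blockTriangular_iff_std huu]
      have : (Matrix.reindex u u (Matrix.fromBlocks c₂ 0 0 c₁)).submatrix ⇑u ⇑u =
          Matrix.fromBlocks c₂ 0 0 c₁ := by
        ext i j; simp
      rw [this]
      exact ⟨hc₂.1, hc₁.1, rfl⟩
    · rw [myIsUnit_submatrix_equiv u]
      have : (Matrix.reindex u u (Matrix.fromBlocks c₂ 0 0 c₁)).submatrix ⇑u ⇑u =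
          Matrix.fromBlocks c₂ 0 0 c₁ := by
        ext i j; simp
      rw [this]
      exact myIsUnit_fromBlocks_zero₂₁.mpr ⟨hc₂.2, hc₁.2⟩
    · rw [hblk, hblk, reindex_eq_transfer]
      have hB : (Matrix.reindex r r (Matrix.fromBlocks b₁ 0 0 b₂)).submatrix ⇑r ⇑r =
          Matrix.fromBlocks b₁ 0 0 b₂ := by
        ext i j; simp
      have hC : (Matrix.reindex u u (Matrix.fromBlocks c₂ 0 0 c₁)).submatrix ⇑u ⇑u =
          Matrix.fromBlocks c₂ 0 0 c₁ := by
        ext i j; simp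
      rw [hB, hC, Matrix.fromBlocks_multiply, Matrix.fromBlocks_multiply]
      simp [e₁, e₂]
end

section
/- Let A be a commutative local principal ideal ring, let n = n₁ + n₂, and let B ⊆ GL_n(A) denote the invertible upper triangular matrices. Suppose α = [[X₁, α₁],[α₂, X₂]] and α' = [[X₁', α₁'],[α₂', X₂']] are block matrices with α₁, α₁' ∈ GL_{n₁}(A) invertible and α₂, α₂' ∈ GL_{n₂}(A) invertible (upper-left block X₁ of size n₁×n₂). Then α ∼ α' (same B-double coset) if and only if α₁ - X₁ α₂⁻¹ X₂ ∼ α₁' - X₁' α₂'⁻¹ X₂' as elements of GL_{n₁}(A) (double cosets of upper triangular matrices in GL_{n₁}(A)) and α₂ ∼ α₂' in GL_{n₂}(A). -/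
open Matrix

section Aux

variable {A : Type*} [CommRing A]

lemma schur_key {m k : ℕ}
    (X₁ : Matrix (Fin m) (Fin k) A) (α₁ : Matrix (Fin m) (Fin m) A)
    (α₂ : Matrix (Fin k) (Fin k) A) (X₂ : Matrix (Fin k) (Fin m) A)
    (b₁ c₁ : Matrix (Fin m) (Fin m) A) (u : Matrix (Fin m) (Fin k) A)
    (b₂ c₂ : Matrix (Fin k) (Fin k) A) (v : Matrix (Fin k) (Fin m) A)
    (h₂ : IsUnit α₂) (hb₂ : IsUnit b₂) (hc₂ : IsUnit c₂) :
    ((b₁*X₁+u*α₂)*v + (b₁*α₁+u*X₂)*c₁) - ((b₁*X₁+u*α₂)*c₂) * (b₂*α₂*c₂)⁻¹ * (b₂*α₂*v + b₂*X₂*c₁)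
      = b₁*(α₁ - X₁*α₂⁻¹*X₂)*c₁ := by
  haveI := α₂.invertibleOfIsUnitDet ((Matrix.isUnit_iff_isUnit_det _).mp h₂)
  haveI := b₂.invertibleOfIsUnitDet ((Matrix.isUnit_iff_isUnit_det _).mp hb₂)
  haveI := c₂.invertibleOfIsUnitDet ((Matrix.isUnit_iff_isUnit_det _).mp hc₂)
  simp only [Matrix.mul_inv_rev]
  simp only [Matrix.mul_add, Matrix.add_mul, Matrix.sub_mul, Matrix.mul_sub, Matrix.mul_assoc,
    Matrix.mul_inv_cancel_left_of_invertible, Matrix.inv_mul_cancel_left_of_invertible,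
    Matrix.mul_inv_of_invertible, Matrix.inv_mul_of_invertible, Matrix.mul_one, Matrix.one_mul]
  abel

lemma blockTriangular_reindex_iff {m k N : ℕ}
    (g : (Fin m ⊕ Fin k) ≃ Fin N)
    (hval : ∀ x, ((g x : Fin N) : ℕ) = Sum.elim (fun i : Fin m => (i : ℕ))
      (fun j : Fin k => m + (j : ℕ)) x)
    (b₁ : Matrix (Fin m) (Fin m) A) (u : Matrix (Fin m) (Fin k) A)
    (L : Matrix (Fin k) (Fin m) A) (b₂ : Matrix (Fin k) (Fin k) A) :
    (Matrix.reindex g g (fromBlocks b₁ u L b₂)).BlockTriangular id ↔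
      b₁.BlockTriangular id ∧ b₂.BlockTriangular id ∧ L = 0 := by
  have happ : ∀ x y, (Matrix.reindex g g (fromBlocks b₁ u L b₂)) (g x) (g y)
      = fromBlocks b₁ u L b₂ x y := by intro x y; simp
  constructor
  · intro h
    refine ⟨fun i j hij => ?_, fun i j hij => ?_, ?_⟩
    · have hg : id (g (Sum.inl j)) < id (g (Sum.inl i)) := by
        simp only [id_eq, Fin.lt_def, hval, Sum.elim_inl]
        exact hij
      simpa [happ] using h hg
    · have hg : id (g (Sum.inr j)) < id (g (Sum.inr i)) := by
        simp only [id_eq, Fin.lt_def, hval, Sum.elim_inr]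
        exact Nat.add_lt_add_left hij m
      simpa [happ] using h hg
    · ext i j
      have hg : id (g (Sum.inl j)) < id (g (Sum.inr i)) := by
        have := j.isLt
        simp only [id_eq, Fin.lt_def, hval, Sum.elim_inl, Sum.elim_inr]
        omega
      simpa [happ] using h hg
  · rintro ⟨h1, h2, rfl⟩
    intro i j hij
    obtain ⟨x, rfl⟩ := g.surjective i
    obtain ⟨y, rfl⟩ := g.surjective j
    rw [happ]
    simp only [id_eq, Fin.lt_def, hval] at hij
    cases x with
    | inl x => cases y with
      | inl y =>
        simp only [Sum.elim_inl] at hij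
        exact h1 (show (y : Fin m) < x from hij)
      | inr y => simp only [Sum.elim_inl, Sum.elim_inr] at hij; omega
    | inr x => cases y with
      | inl y => simp [fromBlocks_apply₂₁]
      | inr y =>
        simp only [Sum.elim_inr] at hij
        exact h2 (show (y : Fin k) < x by omega)

lemma isUnit_reindex_iff {m k N : ℕ} (g : (Fin m ⊕ Fin k) ≃ Fin N)
    (M : Matrix (Fin m ⊕ Fin k) (Fin m ⊕ Fin k) A) :
    IsUnit (Matrix.reindex g g M) ↔ IsUnit M := by
  rw [Matrix.isUnit_iff_isUnit_det, Matrix.det_reindex_self, ← Matrix.isUnit_iff_isUnit_det]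

lemma isUT_reindex_fromBlocks {m k N : ℕ}
    (g : (Fin m ⊕ Fin k) ≃ Fin N)
    (hval : ∀ x, ((g x : Fin N) : ℕ) = Sum.elim (fun i : Fin m => (i : ℕ))
      (fun j : Fin k => m + (j : ℕ)) x)
    {b₁ : Matrix (Fin m) (Fin m) A} (u : Matrix (Fin m) (Fin k) A)
    {b₂ : Matrix (Fin k) (Fin k) A} (h1 : IsUT b₁) (h2 : IsUT b₂) :
    IsUT (Matrix.reindex g g (fromBlocks b₁ u 0 b₂)) := by
  refine ⟨(blockTriangular_reindex_iff g hval _ _ _ _).mpr ⟨h1.1, h2.1, rfl⟩, ?_⟩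
  rw [isUnit_reindex_iff]
  exact Matrix.isUnit_fromBlocks_zero₂₁.mpr ⟨h1.2, h2.2⟩

lemma isUT_decompose {m k N : ℕ}
    (g : (Fin m ⊕ Fin k) ≃ Fin N)
    (hval : ∀ x, ((g x : Fin N) : ℕ) = Sum.elim (fun i : Fin m => (i : ℕ))
      (fun j : Fin k => m + (j : ℕ)) x)
    (b : Matrix (Fin N) (Fin N) A) (hb : IsUT b) :
    ∃ (b₁ : Matrix (Fin m) (Fin m) A) (u : Matrix (Fin m) (Fin k) A)
      (b₂ : Matrix (Fin k) (Fin k) A), IsUT b₁ ∧ IsUT b₂ ∧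
        b = Matrix.reindex g g (fromBlocks b₁ u 0 b₂) := by
  obtain ⟨hbt, hunit⟩ := hb
  have hb' : b = Matrix.reindex g g (Matrix.reindex g.symm g.symm b) := by
    rw [← Matrix.reindex_symm]
    exact ((Matrix.reindex g g).apply_symm_apply b).symm
  set B := Matrix.reindex g.symm g.symm b with hB
  have hBblocks : B = fromBlocks B.toBlocks₁₁ B.toBlocks₁₂ B.toBlocks₂₁ B.toBlocks₂₂ :=
    (fromBlocks_toBlocks B).symm
  rw [hBblocks] at hb'
  rw [hb'] at hbt hunit
  obtain ⟨h1, h2, hL⟩ := (blockTriangular_reindex_iff g hval _ _ _ _).mp hbt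
  rw [hL] at hb' hunit
  rw [isUnit_reindex_iff] at hunit
  obtain ⟨hu1, hu2⟩ := Matrix.isUnit_fromBlocks_zero₂₁.mp hunit
  exact ⟨B.toBlocks₁₁, B.toBlocks₁₂, B.toBlocks₂₂, ⟨h1, hu1⟩, ⟨h2, hu2⟩, hb'⟩

lemma reindex_mul_mul {N : ℕ} {ι₁ ι₂ : Type*} [Fintype ι₁] [Fintype ι₂]
    (e : ι₁ ≃ Fin N) (f : ι₂ ≃ Fin N)
    (B : Matrix ι₁ ι₁ A) (M : Matrix ι₁ ι₂ A) (C : Matrix ι₂ ι₂ A) :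
    Matrix.reindex e e B * Matrix.reindex e f M * Matrix.reindex f f C
      = Matrix.reindex e f (B * M * C) := by
  simp only [Matrix.reindex_apply]
  rw [Matrix.submatrix_mul_equiv, Matrix.submatrix_mul_equiv]

end Aux

theorem stmt1 {A : Type*} [CommRing A] [IsLocalRing A] [IsPrincipalIdealRing A]
    {n₁ n₂ : ℕ} (X₁ X₁' : Matrix (Fin n₁) (Fin n₂) A)
    (α₁ α₁' : Matrix (Fin n₁) (Fin n₁) A) (α₂ α₂' : Matrix (Fin n₂) (Fin n₂) A)
    (X₂ X₂' : Matrix (Fin n₂) (Fin n₁) A)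
    (h₁ : IsUnit α₁) (h₁' : IsUnit α₁') (h₂ : IsUnit α₂) (h₂' : IsUnit α₂') :
    SameDC (blk X₁ α₁ α₂ X₂) (blk X₁' α₁' α₂' X₂') ↔
      SameDC (α₁ - X₁ * α₂⁻¹ * X₂) (α₁' - X₁' * α₂'⁻¹ * X₂') ∧ SameDC α₂ α₂' := by
  set e : (Fin n₁ ⊕ Fin n₂) ≃ Fin (n₁ + n₂) := finSumFinEquiv with he
  set f : (Fin n₂ ⊕ Fin n₁) ≃ Fin (n₁ + n₂) :=
    finSumFinEquiv.trans (finCongr (Nat.add_comm n₂ n₁)) with hf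
  have hval_e : ∀ x, ((e x : Fin (n₁ + n₂)) : ℕ) = Sum.elim (fun i : Fin n₁ => (i : ℕ))
      (fun j : Fin n₂ => n₁ + (j : ℕ)) x := by
    rintro (i | j) <;> simp [he]
  have hval_f : ∀ x, ((f x : Fin (n₁ + n₂)) : ℕ) = Sum.elim (fun i : Fin n₂ => (i : ℕ))
      (fun j : Fin n₁ => n₂ + (j : ℕ)) x := by
    rintro (i | j) <;> simp [hf, Nat.add_comm]
  constructor
  · rintro ⟨b, c, hb, hc, heq⟩
    obtain ⟨b₁, u, b₂, hb₁, hb₂, rfl⟩ := isUT_decompose e hval_e b hb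
    obtain ⟨c₂, v, c₁, hc₂, hc₁, rfl⟩ := isUT_decompose f hval_f c hc
    rw [show blk X₁ α₁ α₂ X₂ = Matrix.reindex e f (fromBlocks X₁ α₁ α₂ X₂) from rfl,
      show blk X₁' α₁' α₂' X₂' = Matrix.reindex e f (fromBlocks X₁' α₁' α₂' X₂') from rfl,
      reindex_mul_mul] at heq
    have heq' := (Matrix.reindex e f).injective heq
    rw [fromBlocks_multiply, fromBlocks_multiply] at heq'
    have e11 := congrArg Matrix.toBlocks₁₁ heq'
    have e12 := congrArg Matrix.toBlocks₁₂ heq'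
    have e21 := congrArg Matrix.toBlocks₂₁ heq'
    have e22 := congrArg Matrix.toBlocks₂₂ heq'
    simp only [Matrix.toBlocks_fromBlocks₁₁, Matrix.toBlocks_fromBlocks₁₂,
      Matrix.toBlocks_fromBlocks₂₁, Matrix.toBlocks_fromBlocks₂₂,
      Matrix.zero_mul, Matrix.mul_zero, zero_add, add_zero] at e11 e12 e21 e22
    constructor
    · refine ⟨b₁, c₁, hb₁, hc₁, ?_⟩
      rw [← e11, ← e12, ← e21, ← e22]
      rw [← schur_key X₁ α₁ α₂ X₂ b₁ c₁ u b₂ c₂ v h₂ hb₂.2 hc₂.2]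
    · exact ⟨b₂, c₂, hb₂, hc₂, e21⟩
  · rintro ⟨⟨b₁, c₁, hb₁, hc₁, h1⟩, ⟨b₂, c₂, hb₂, hc₂, hh2⟩⟩
    haveI := α₂.invertibleOfIsUnitDet ((Matrix.isUnit_iff_isUnit_det _).mp h₂)
    haveI := b₂.invertibleOfIsUnitDet ((Matrix.isUnit_iff_isUnit_det _).mp hb₂.2)
    haveI := c₂.invertibleOfIsUnitDet ((Matrix.isUnit_iff_isUnit_det _).mp hc₂.2)
    set u : Matrix (Fin n₁) (Fin n₂) A := (X₁' - b₁*X₁*c₂) * c₂⁻¹ * α₂⁻¹ with hu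
    set v : Matrix (Fin n₂) (Fin n₁) A := α₂⁻¹ * (b₂⁻¹*X₂' - X₂*c₁) with hv
    refine ⟨Matrix.reindex e e (fromBlocks b₁ u 0 b₂),
      Matrix.reindex f f (fromBlocks c₂ v 0 c₁),
      isUT_reindex_fromBlocks e hval_e u hb₁ hb₂,
      isUT_reindex_fromBlocks f hval_f v hc₂ hc₁, ?_⟩
    rw [show blk X₁ α₁ α₂ X₂ = Matrix.reindex e f (fromBlocks X₁ α₁ α₂ X₂) from rfl,
      show blk X₁' α₁' α₂' X₂' = Matrix.reindex e f (fromBlocks X₁' α₁' α₂' X₂') from rfl,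
      reindex_mul_mul]
    congr 1
    rw [fromBlocks_multiply, fromBlocks_multiply]
    simp only [Matrix.zero_mul, Matrix.mul_zero, zero_add, add_zero]
    have e11 : (b₁*X₁ + u*α₂) * c₂ = X₁' := by
      rw [hu]
      simp only [Matrix.add_mul, Matrix.sub_mul, Matrix.mul_assoc,
        Matrix.inv_mul_cancel_left_of_invertible, Matrix.inv_mul_of_invertible,
        Matrix.mul_one]
      abel
    have e21 : b₂*α₂ * c₂ = α₂' := by rw [Matrix.mul_assoc] at hh2 ⊢; exact hh2
    have e22 : b₂*α₂ * v + b₂*X₂ * c₁ = X₂' := by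
      rw [hv]
      simp only [Matrix.mul_sub, Matrix.mul_assoc,
        Matrix.mul_inv_cancel_left_of_invertible, Matrix.mul_inv_of_invertible,
        Matrix.one_mul]
      abel
    have hα₂'u : IsUnit α₂' := by
      rw [← e21]
      exact (hb₂.2.mul h₂).mul hc₂.2
    have e12 : (b₁*X₁ + u*α₂) * v + (b₁*α₁ + u*X₂) * c₁ = α₁' := by
      have hs := schur_key X₁ α₁ α₂ X₂ b₁ c₁ u b₂ c₂ v h₂ hb₂.2 hc₂.2
      rw [h1] at hs
      have he21' : b₂*α₂*c₂ = α₂' := by rw [← e21]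
      rw [show (b₁*X₁+u*α₂)*c₂ = X₁' from e11, he21',
        show b₂*α₂*v + b₂*X₂*c₁ = X₂' from e22] at hs
      exact sub_left_inj.mp hs
    rw [e11, e12, e21, e22]
end

section
/- Let A be a commutative local principal ideal ring, α ∈ GL_n(A), and let F^j = α·F₀^j where F₀^j is the span of the first j standard basis vectors of A^n. For 0 ≤ i, j ≤ n, let [α]^{ij} denote the lower-left (n−i)×j submatrix of α (rows i+1,…,n and columns 1,…,j). Then the column space of [α]^{ij} (the A-submodule of A^{n−i} generated by the columns) is isomorphic as an A-module to F^j / (F^j ∩ F₀^i). -/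
open Matrix

/-- `stdFlag A n i` is the submodule of `A^n` spanned by the first `i` standard
basis vectors, i.e. vectors vanishing at coordinates `≥ i`. -/
def stdFlag (A : Type*) [CommRing A] (n i : ℕ) : Submodule A (Fin n → A) where
  carrier := {v | ∀ m : Fin n, i ≤ (m : ℕ) → v m = 0}
  add_mem' := by intro a b ha hb m hm; simp [ha m hm, hb m hm]
  zero_mem' := by intro m hm; rfl
  smul_mem' := by intro c v hv m hm; simp [hv m hm]

/-- The column space of a matrix: the submodule generated by its columns. -/
def colSpace {A : Type*} [CommRing A] {r c : ℕ} (M : Matrix (Fin r) (Fin c) A) :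
    Submodule A (Fin r → A) :=
  Submodule.span A (Set.range fun j : Fin c => fun m : Fin r => M m j)

lemma stdFlag_eq_span (A : Type*) [CommRing A] {n j : ℕ} (hj : j ≤ n) :
    stdFlag A n j = Submodule.span A
      (Set.range fun k : Fin j => (Pi.single (Fin.castLE hj k) 1 : Fin n → A)) := by
  apply le_antisymm
  · intro v hv
    have hrep : v = ∑ m : Fin n, v m • (Pi.single m 1 : Fin n → A) := by
      ext m'
      simp [Pi.single_apply, Finset.sum_ite_eq' Finset.univ m']
    rw [hrep]
    refine Submodule.sum_mem _ fun m _ => ?_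
    by_cases hm : (m : ℕ) < j
    · refine Submodule.smul_mem _ _ (Submodule.subset_span ?_)
      exact ⟨⟨m, hm⟩, by ext; simp⟩
    · rw [hv m (by omega)]
      simp
  · rw [Submodule.span_le]
    rintro _ ⟨k, rfl⟩ m hm
    have : m ≠ Fin.castLE hj k := by
      intro h; subst h; simp at hm; omega
    simp [Pi.single_apply, this]

theorem stmt2 {A : Type*} [CommRing A] [IsLocalRing A] [IsPrincipalIdealRing A]
    {n : ℕ} (α : Matrix (Fin n) (Fin n) A) (hα : IsUnit α)
    (i j : ℕ) (hi : i ≤ n) (hj : j ≤ n) :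
    Nonempty
      ((colSpace (α.submatrix
          (fun r : Fin (n - i) => (⟨i + (r : ℕ), by have := r.2; omega⟩ : Fin n))
          (Fin.castLE hj))) ≃ₗ[A]
        (↥(Submodule.map α.mulVecLin (stdFlag A n j)) ⧸
          Submodule.comap (Submodule.map α.mulVecLin (stdFlag A n j)).subtype
            (stdFlag A n i))) := by
  set F := Submodule.map α.mulVecLin (stdFlag A n j) with hF
  let π : (Fin n → A) →ₗ[A] (Fin (n - i) → A) :=
    { toFun := fun v r => v ⟨i + (r : ℕ), by have := r.2; omega⟩
      map_add' := by intros; rfl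
      map_smul' := by intros; rfl }
  let f : ↥F →ₗ[A] (Fin (n - i) → A) := π ∘ₗ F.subtype
  have hker : LinearMap.ker f = Submodule.comap F.subtype (stdFlag A n i) := by
    ext ⟨v, hv⟩
    constructor
    · intro h m hm
      have h' : π v = 0 := h
      have := congrFun h' ⟨(m : ℕ) - i, by have := m.2; omega⟩
      simpa [π, show i + ((m : ℕ) - i) = (m : ℕ) by omega, Fin.ext_iff] using this
    · intro h
      have : π v = 0 := by
        funext r
        exact h ⟨i + (r : ℕ), by have := r.2; omega⟩ (by simp)
      exact this
  have hrange : LinearMap.range f = colSpace (α.submatrix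
          (fun r : Fin (n - i) => (⟨i + (r : ℕ), by have := r.2; omega⟩ : Fin n))
          (Fin.castLE hj)) := by
    rw [show f = π ∘ₗ F.subtype from rfl, LinearMap.range_comp, Submodule.range_subtype,
      hF, stdFlag_eq_span A hj, Submodule.map_span, Submodule.map_span,
      ← Set.range_comp, ← Set.range_comp, colSpace]
    refine congrArg (Submodule.span A) (congrArg Set.range ?_)
    funext k
    funext r
    simp [π, mulVecLin_apply, Matrix.submatrix_apply]
  exact ⟨(LinearEquiv.ofEq _ _ hrange.symm).trans
    ((LinearMap.quotKerEquivRange f).symm.trans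
      (Submodule.quotEquivOfEq _ _ hker))⟩
end

section
/- Let A be a commutative local principal ideal ring of finite length k with maximal ideal generated by π (so π^k = 0, π^{k−1} ≠ 0), and let α ∈ GL_n(A). For each 1 ≤ i, j ≤ n, the subquotient (F^j ∩ F₀^i)/(F^{j−1} ∩ F₀^i + F^j ∩ F₀^{i−1}) is a cyclic A-module isomorphic to A/(π^{r_{ij}}) for a unique 0 ≤ r_{ij} ≤ k, and for every fixed j, the sum over i of r_{ij} equals k, and for every fixed i, the sum over j of r_{ij} equals k. -/
open Matrix

/-- The subquotient `(F^j ∩ F₀^i) / (F^{j-1} ∩ F₀^i + F^j ∩ F₀^{i-1})`, where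
`F₀` is the standard flag and `F = α F₀`. -/
abbrev interQuot (A : Type*) [CommRing A] {n : ℕ} (α : Matrix (Fin n) (Fin n) A)
    (i j : ℕ) :=
  ↥(Submodule.map α.mulVecLin (stdFlag A n j) ⊓ stdFlag A n i) ⧸
    Submodule.comap (Submodule.map α.mulVecLin (stdFlag A n j) ⊓ stdFlag A n i).subtype
      ((Submodule.map α.mulVecLin (stdFlag A n (j - 1)) ⊓ stdFlag A n i) ⊔
        (Submodule.map α.mulVecLin (stdFlag A n j) ⊓ stdFlag A n (i - 1)))

namespace Stmt3Aux

open IsLocalRing Submodule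

variable {A : Type*} [CommRing A] [IsLocalRing A] [IsPrincipalIdealRing A]
  {π : A} {k : ℕ}

set_option linter.unusedSectionVars false

lemma pow_zero_of_ge (hk0 : π ^ k = 0) {m : ℕ} (hm : k ≤ m) : π ^ m = 0 := by
  calc π ^ m = π ^ k * π ^ (m - k) := by rw [← pow_add]; congr 1; omega
  _ = 0 := by rw [hk0, zero_mul]

lemma pow_notMem_span (hk0 : π ^ k = 0) (hk1 : π ^ (k - 1) ≠ 0) {t s : ℕ}
    (hts : t < s) (htk : t < k) : π ^ t ∉ Ideal.span {π ^ s} := by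
  intro h
  rw [Ideal.mem_span_singleton] at h
  obtain ⟨d, hd⟩ := h
  apply hk1
  have h1 : π ^ (k - 1) = π ^ (k - 1 - t) * π ^ t := by rw [← pow_add]; congr 1; omega
  rw [h1, hd, ← mul_assoc, ← pow_add]
  have h2 : k ≤ k - 1 - t + s := by omega
  rw [pow_zero_of_ge hk0 h2, zero_mul]

lemma span_pow_le_span_pow (hk0 : π ^ k = 0) (hk1 : π ^ (k - 1) ≠ 0) {a b : ℕ}
    (ha : a ≤ k) (hb : b ≤ k) : Ideal.span {π ^ b} ≤ Ideal.span {π ^ a} ↔ a ≤ b := by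
  constructor
  · intro h
    by_contra hab
    push_neg at hab
    exact pow_notMem_span hk0 hk1 hab (lt_of_lt_of_le hab ha)
      (h (Ideal.subset_span rfl))
  · intro h
    exact Ideal.span_singleton_le_span_singleton.mpr (pow_dvd_pow π h)

lemma span_pow_inj (hk0 : π ^ k = 0) (hk1 : π ^ (k - 1) ≠ 0) {a b : ℕ}
    (ha : a ≤ k) (hb : b ≤ k) (h : Ideal.span {π ^ a} = Ideal.span {π ^ b}) : a = b :=
  le_antisymm ((span_pow_le_span_pow hk0 hk1 ha hb).mp h.ge)
    ((span_pow_le_span_pow hk0 hk1 hb ha).mp h.le)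


lemma unit_pi_pow (hk0 : π ^ k = 0)
    (hmax : maximalIdeal A = Ideal.span {π}) {x : A} (hx : x ≠ 0) :
    ∃ (u : Aˣ) (t : ℕ), t < k ∧ x = ↑u * π ^ t := by
  classical
  set P : ℕ → Prop := fun t => x ∈ Ideal.span {π ^ t} with hP
  have hP0 : P 0 := by simp [hP, Ideal.span_singleton_one]
  set t := Nat.findGreatest P k with htdef
  have hPt : P t := Nat.findGreatest_spec (Nat.zero_le k) hP0
  have htk : t < k := by
    rcases lt_or_eq_of_le (Nat.findGreatest_le (P := P) k) with h | h
    · exact h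
    · exfalso
      apply hx
      have : x ∈ Ideal.span {π ^ k} := by rw [← h]; exact hPt
      rw [hk0, Ideal.mem_span_singleton] at this
      obtain ⟨c, hc⟩ := this
      simpa using hc
  have hPt1 : ¬ P (t + 1) := Nat.findGreatest_is_greatest (Nat.lt_succ_self t) htk
  rw [hP] at hPt
  rw [Ideal.mem_span_singleton] at hPt
  obtain ⟨c, hc⟩ := hPt
  have hcu : IsUnit c := by
    by_contra hcn
    apply hPt1
    have hcm : c ∈ maximalIdeal A := hcn
    rw [hmax, Ideal.mem_span_singleton] at hcm
    obtain ⟨d, hd⟩ := hcm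
    show x ∈ Ideal.span {π ^ (t + 1)}
    rw [Ideal.mem_span_singleton]
    exact ⟨d, by rw [hc, hd, pow_succ]; ring⟩
  obtain ⟨u, hu⟩ := hcu
  exact ⟨u, t, htk, by rw [hc, ← hu]; ring⟩

lemma ideal_eq_span_pow (hk0 : π ^ k = 0)
    (hmax : maximalIdeal A = Ideal.span {π}) (I : Ideal A) :
    ∃ t, t ≤ k ∧ I = Ideal.span {π ^ t} := by
  obtain ⟨x, hx⟩ := (IsPrincipalIdealRing.principal I).1
  rcases eq_or_ne x 0 with h | h
  · exact ⟨k, le_rfl, by rw [hx, h, hk0]⟩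
  · obtain ⟨u, t, htk, hxu⟩ := unit_pi_pow hk0 hmax h
    refine ⟨t, le_of_lt htk, ?_⟩
    rw [hx, hxu]
    apply le_antisymm
    · exact Ideal.span_singleton_le_span_singleton.mpr ⟨↑u, mul_comm _ _⟩
    · exact Ideal.span_singleton_le_span_singleton.mpr
        ⟨↑u⁻¹, by rw [mul_comm, ← mul_assoc, Units.inv_mul, one_mul]⟩

open Classical in
/-- the exponent of an ideal -/
noncomputable def expo (π : A) (k : ℕ) (I : Ideal A) : ℕ :=
  if h : ∃ t, t ≤ k ∧ I = Ideal.span {π ^ t} then h.choose else 0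

lemma expo_spec' {I : Ideal A} (h : ∃ t, t ≤ k ∧ I = Ideal.span {π ^ t}) :
    expo π k I ≤ k ∧ I = Ideal.span {π ^ expo π k I} := by
  classical
  rw [expo]
  split
  case isTrue h' => exact h'.choose_spec
  case isFalse h' => exact absurd h h'


variable (hk0 : π ^ k = 0) (hk1 : π ^ (k - 1) ≠ 0) (hmax : maximalIdeal A = Ideal.span {π})

section expo2
include hk0 hmax

lemma expo_le (I : Ideal A) : expo π k I ≤ k :=
  (expo_spec' (ideal_eq_span_pow hk0 hmax I)).1

lemma expo_eq (I : Ideal A) : I = Ideal.span {π ^ expo π k I} :=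
  (expo_spec' (ideal_eq_span_pow hk0 hmax I)).2

include hk1

lemma expo_unique {I : Ideal A} {t : ℕ} (ht : t ≤ k) (h : I = Ideal.span {π ^ t}) :
    expo π k I = t :=
  span_pow_inj hk0 hk1 (expo_le hk0 hmax I) ht ((expo_eq hk0 hmax I).symm.trans h)

lemma expo_bot : expo π k (⊥ : Ideal A) = k :=
  expo_unique hk0 hk1 hmax le_rfl (by rw [hk0]; exact (Ideal.span_singleton_eq_bot.mpr rfl).symm)

lemma expo_top : expo π k (⊤ : Ideal A) = 0 :=
  expo_unique hk0 hk1 hmax (Nat.zero_le k) (by rw [pow_zero, Ideal.span_singleton_one])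

lemma expo_antitone {I J : Ideal A} (h : I ≤ J) : expo π k J ≤ expo π k I := by
  rw [← span_pow_le_span_pow hk0 hk1 (expo_le hk0 hmax J) (expo_le hk0 hmax I)]
  rw [← expo_eq hk0 hmax I, ← expo_eq hk0 hmax J]
  exact h

end expo2

include hk0 hk1 in
lemma mul_pow_mem_iff (hmax : maximalIdeal A = Ideal.span {π}) {a b : ℕ}
    (hab : a ≤ b) (hb : b ≤ k) (c : A) :
    c * π ^ a ∈ Ideal.span {π ^ b} ↔ c ∈ Ideal.span {π ^ (b - a)} := by
  constructor
  · intro h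
    rcases eq_or_ne c 0 with rfl | hc
    · exact Ideal.zero_mem _
    obtain ⟨u, t, htk, rfl⟩ := unit_pi_pow hk0 hmax hc
    rcases le_or_gt (b - a) t with hle | hlt
    · rw [Ideal.mem_span_singleton]
      exact Dvd.dvd.mul_left (pow_dvd_pow π hle) _
    · exfalso
      have h2 : π ^ (t + a) ∈ Ideal.span {π ^ b} := by
        have := Ideal.mul_mem_left _ ↑u⁻¹ h
        rw [← mul_assoc, ← mul_assoc, Units.inv_mul, one_mul, ← pow_add] at this
        exact this
      exact pow_notMem_span hk0 hk1 (by omega) (by omega) h2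
  · intro h
    rw [Ideal.mem_span_singleton] at h ⊢
    obtain ⟨d, hd⟩ := h
    exact ⟨d, by rw [hd, mul_assoc, mul_comm d, ← mul_assoc, ← pow_add,
      Nat.sub_add_cancel hab]⟩

include hk0 hk1 hmax in
lemma iso2 (I J : Ideal A) (hJI : J ≤ I) :
    Nonempty ((↥I ⧸ Submodule.comap I.subtype J) ≃ₗ[A]
      (A ⧸ Ideal.span {π ^ (expo π k J - expo π k I)})) := by
  have hab : expo π k I ≤ expo π k J := expo_antitone hk0 hk1 hmax hJI
  have hbk : expo π k J ≤ k := expo_le hk0 hmax J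
  have hπa : π ^ expo π k I ∈ I := by
    have h := expo_eq hk0 hmax I
    have h2 : π ^ expo π k I ∈ Ideal.span {π ^ expo π k I} := Ideal.subset_span rfl
    exact h.ge h2
  set χ : A →ₗ[A] ↥I := LinearMap.toSpanSingleton A ↥I ⟨π ^ expo π k I, hπa⟩ with hχ
  set φ : A →ₗ[A] (↥I ⧸ Submodule.comap I.subtype J) :=
    (Submodule.comap I.subtype J).mkQ ∘ₗ χ with hφ
  have hsurj : Function.Surjective φ := by
    intro q
    obtain ⟨⟨x, hx⟩, rfl⟩ := Submodule.mkQ_surjective _ q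
    have hx' : x ∈ Ideal.span {π ^ expo π k I} := by
      rw [← expo_eq hk0 hmax I]; exact hx
    rw [Ideal.mem_span_singleton] at hx'
    obtain ⟨c, hc⟩ := hx'
    refine ⟨c, ?_⟩
    show Submodule.mkQ _ (χ c) = _
    congr 1
    ext
    show c • π ^ expo π k I = x
    rw [smul_eq_mul, hc, mul_comm]
  have hker : LinearMap.ker φ = Ideal.span {π ^ (expo π k J - expo π k I)} := by
    ext c
    rw [LinearMap.mem_ker, hφ, LinearMap.comp_apply, ← LinearMap.mem_ker, Submodule.ker_mkQ,
      Submodule.mem_comap]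
    show (c • π ^ expo π k I : A) ∈ J ↔ _
    rw [smul_eq_mul]
    conv_lhs => rw [expo_eq hk0 hmax J]
    exact mul_pow_mem_iff hk0 hk1 hmax hab hbk c
  have e := φ.quotKerEquivOfSurjective hsurj
  rw [hker] at e
  exact ⟨e.symm⟩

lemma iso1 {M : Type*} [AddCommGroup M] [Module A M] (g : M) (Xb X Y : Submodule A M)
    (hYX : Y ≤ X) (hbY : Xb ≤ Y) (hX : X ≤ Xb ⊔ Submodule.span A {g}) :
    Nonempty ((↥X ⧸ Submodule.comap X.subtype Y) ≃ₗ[A]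
      (↥(Submodule.comap (LinearMap.toSpanSingleton A M g) X) ⧸
        Submodule.comap (Submodule.comap (LinearMap.toSpanSingleton A M g) X).subtype
          (Submodule.comap (LinearMap.toSpanSingleton A M g) Y))) := by
  set IX := Submodule.comap (LinearMap.toSpanSingleton A M g) X with hIX
  set IY := Submodule.comap (LinearMap.toSpanSingleton A M g) Y with hIY
  set ψ : ↥IX →ₗ[A] ↥X := (LinearMap.toSpanSingleton A M g).restrict (fun c hc => hc) with hψ
  set φ : ↥IX →ₗ[A] (↥X ⧸ Submodule.comap X.subtype Y) :=
    (Submodule.comap X.subtype Y).mkQ ∘ₗ ψ with hφ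
  have hsurj : Function.Surjective φ := by
    intro q
    obtain ⟨⟨x, hx⟩, rfl⟩ := Submodule.mkQ_surjective _ q
    obtain ⟨b, hb, z, hz, hxbz⟩ := Submodule.mem_sup.mp (hX hx)
    obtain ⟨c, hc⟩ := Submodule.mem_span_singleton.mp hz
    have hzeq : z = x - b := eq_sub_of_add_eq' hxbz
    have hzX : z ∈ X := by
      rw [hzeq]; exact Submodule.sub_mem X hx (hYX (hbY hb))
    have hcg : c • g ∈ X := by rw [hc]; exact hzX
    refine ⟨⟨c, hcg⟩, ?_⟩
    show Submodule.mkQ _ (ψ ⟨c, hcg⟩) = Submodule.mkQ _ ⟨x, hx⟩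
    rw [Submodule.mkQ_apply, Submodule.mkQ_apply, Submodule.Quotient.eq]
    show (⟨c • g, hcg⟩ - ⟨x, hx⟩ : ↥X) ∈ _
    rw [Submodule.mem_comap]
    show c • g - x ∈ Y
    rw [hc, hzeq]
    simpa using Y.neg_mem (hbY hb)
  have hker : LinearMap.ker φ = Submodule.comap IX.subtype IY := by
    ext ⟨c, hcIX⟩
    rw [LinearMap.mem_ker, hφ, LinearMap.comp_apply, ← LinearMap.mem_ker, Submodule.ker_mkQ,
      Submodule.mem_comap, Submodule.mem_comap]
    exact Iff.rfl
  have e := φ.quotKerEquivOfSurjective hsurj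
  rw [hker] at e
  exact ⟨e.symm⟩

lemma secondIso {M : Type*} [AddCommGroup M] [Module A M] (P W Z : Submodule A M)
    (hWP : W ≤ P) (hPZW : P ⊓ Z ≤ W) :
    Nonempty ((↥P ⧸ Submodule.comap P.subtype W) ≃ₗ[A]
      (↥(P ⊔ Z) ⧸ Submodule.comap (P ⊔ Z).subtype (W ⊔ Z))) := by
  have h1 : P ⊓ (W ⊔ Z) = W := by
    rw [inf_comm P (W ⊔ Z), sup_inf_assoc_of_le Z hWP, inf_comm Z P,
      sup_eq_left.mpr hPZW]
  have h2 : P ⊔ (W ⊔ Z) = P ⊔ Z := by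
    rw [← sup_assoc, sup_eq_left.mpr hWP]
  have base := LinearMap.quotientInfEquivSupQuotient P (W ⊔ Z)
  rw [← Submodule.comap_inf, h1, h2] at base
  exact ⟨base⟩

include hk0 hk1 hmax in
lemma isoMain {M : Type*} [AddCommGroup M] [Module A M] (g : M) (Z P W : Submodule A M)
    (hWP : W ≤ P) (hPZW : P ⊓ Z ≤ W) (hP : P ≤ Z ⊔ Submodule.span A {g}) :
    Nonempty ((↥P ⧸ Submodule.comap P.subtype W) ≃ₗ[A] (A ⧸ Ideal.span
      {π ^ (expo π k (Submodule.comap (LinearMap.toSpanSingleton A M g) (W ⊔ Z)) -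
            expo π k (Submodule.comap (LinearMap.toSpanSingleton A M g) (P ⊔ Z)))})) := by
  obtain ⟨e1⟩ := secondIso P W Z hWP hPZW
  obtain ⟨e2⟩ := iso1 g Z (P ⊔ Z) (W ⊔ Z) (sup_le_sup_right hWP Z) le_sup_right
    (sup_le hP (le_sup_left.trans le_rfl))
  obtain ⟨e3⟩ := iso2 hk0 hk1 hmax
    (Submodule.comap (LinearMap.toSpanSingleton A M g) (P ⊔ Z))
    (Submodule.comap (LinearMap.toSpanSingleton A M g) (W ⊔ Z))
    (Submodule.comap_mono (sup_le_sup_right hWP Z))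
  exact ⟨(e1.trans e2).trans e3⟩

include hk0 hk1 in
lemma quot_iso_inj {s t : ℕ} (hs : s ≤ k) (ht : t ≤ k)
    (e : (A ⧸ Ideal.span {π ^ s}) ≃ₗ[A] (A ⧸ Ideal.span {π ^ t})) : s = t := by
  have key : ∀ (I : Ideal A) (x : A), x ∈ I ↔ ∀ y : A ⧸ I, x • y = 0 := by
    intro I x
    constructor
    · intro h y
      obtain ⟨z, rfl⟩ := Submodule.mkQ_surjective _ y
      rw [Submodule.mkQ_apply, ← Submodule.Quotient.mk_smul, Submodule.Quotient.mk_eq_zero]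
      rw [smul_eq_mul]
      exact I.mul_mem_right z h
    · intro h
      have := h (Submodule.Quotient.mk 1)
      rw [← Submodule.Quotient.mk_smul, Submodule.Quotient.mk_eq_zero, smul_eq_mul,
        mul_one] at this
      exact this
  apply span_pow_inj hk0 hk1 hs ht
  ext x
  rw [key, key]
  constructor
  · intro h y
    obtain ⟨y', rfl⟩ := e.surjective y
    rw [← _root_.map_smul, h y', map_zero]
  · intro h y
    have := h (e y)
    rw [← _root_.map_smul] at this
    exact e.injective (by rw [this, map_zero])

lemma antitone_of_succ (f : ℕ → ℕ) (hf : ∀ i, f (i + 1) ≤ f i) :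
    ∀ {a b : ℕ}, a ≤ b → f b ≤ f a := by
  intro a b h
  induction h with
  | refl => exact le_rfl
  | step h ih => exact (hf _).trans ih

lemma telescope_sum (f : ℕ → ℕ) (hf : ∀ i, f (i + 1) ≤ f i) (n : ℕ) :
    ∑ i ∈ Finset.range n, (f i - f (i + 1)) = f 0 - f n := by
  induction n with
  | zero => simp
  | succ m ih =>
    rw [Finset.sum_range_succ, ih]
    have h1 : f (m + 1) ≤ f m := hf m
    have h2 : f m ≤ f 0 := antitone_of_succ f hf (Nat.zero_le m)
    omega

section Flag

variable {n : ℕ}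

lemma mem_stdFlag {v : Fin n → A} {i : ℕ} :
    v ∈ stdFlag A n i ↔ ∀ m : Fin n, i ≤ (m : ℕ) → v m = 0 := Iff.rfl

lemma stdFlag_zero : stdFlag A n 0 = ⊥ := by
  ext v
  simp only [mem_stdFlag, Submodule.mem_bot]
  constructor
  · intro h; funext m; exact h m (Nat.zero_le _)
  · rintro rfl m _; rfl

lemma stdFlag_mono {i i' : ℕ} (h : i ≤ i') : stdFlag A n i ≤ stdFlag A n i' :=
  fun v hv m hm => hv m (le_trans h hm)

lemma stdFlag_top : stdFlag A n n = ⊤ := by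
  ext v
  simp only [mem_stdFlag, Submodule.mem_top, iff_true]
  intro m hm
  exact absurd m.isLt (not_lt.mpr hm)

lemma single_mem_stdFlag (j : Fin n) (c : A) :
    c • (Pi.single j 1 : Fin n → A) ∈ stdFlag A n ((j : ℕ) + 1) := by
  intro m hm
  have hne : m ≠ j := by
    intro h
    subst h
    omega
  simp [Pi.single_eq_of_ne hne]

lemma stdFlag_succ (j : Fin n) :
    stdFlag A n ((j : ℕ) + 1) = stdFlag A n j ⊔ Submodule.span A {(Pi.single j 1 : Fin n → A)} := by
  apply le_antisymm
  · intro v hv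
    rw [Submodule.mem_sup]
    refine ⟨v - v j • (Pi.single j 1 : Fin n → A), ?_, v j • (Pi.single j 1 : Fin n → A),
      Submodule.smul_mem _ _ (Submodule.subset_span rfl), by abel⟩
    intro m hm
    rcases eq_or_lt_of_le hm with heq | hlt
    · have hmj : m = j := by
        apply Fin.ext
        omega
      subst hmj
      simp
    · have hv' := hv m (by omega)
      have hne : m ≠ j := by intro h; subst h; omega
      simp [hv', Pi.single_eq_of_ne hne]
  · refine sup_le (stdFlag_mono (Nat.le_succ _)) ?_
    rw [Submodule.span_le, Set.singleton_subset_iff]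
    simpa using single_mem_stdFlag j (1 : A)

lemma comap_single_stdFlag_self (j : Fin n) :
    Submodule.comap (LinearMap.toSpanSingleton A (Fin n → A) ((Pi.single j 1 : Fin n → A)))
      (stdFlag A n j) = ⊥ := by
  ext c
  simp only [Submodule.mem_comap, Submodule.mem_bot, LinearMap.toSpanSingleton_apply]
  constructor
  · intro h
    have := h j le_rfl
    simpa using this
  · rintro rfl
    rw [zero_smul]
    exact (stdFlag A n j).zero_mem

lemma comap_single_stdFlag_succ (j : Fin n) :
    Submodule.comap (LinearMap.toSpanSingleton A (Fin n → A) ((Pi.single j 1 : Fin n → A)))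
      (stdFlag A n ((j : ℕ) + 1)) = ⊤ :=
  eq_top_iff.mpr (fun c _ => single_mem_stdFlag j c)

end Flag

section Mat

variable {n : ℕ} {α : Matrix (Fin n) (Fin n) A}

lemma comap_toSpan_map (hinj : Function.Injective α.mulVecLin) (v : Fin n → A)
    (S : Submodule A (Fin n → A)) :
    Submodule.comap (LinearMap.toSpanSingleton A (Fin n → A) (α.mulVecLin v))
      (Submodule.map α.mulVecLin S) =
      Submodule.comap (LinearMap.toSpanSingleton A (Fin n → A) v) S := by
  ext c
  simp only [Submodule.mem_comap, LinearMap.toSpanSingleton_apply]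
  constructor
  · rintro ⟨w, hw, hwe⟩
    have hwc : w = c • v := hinj (hwe.trans (_root_.map_smul α.mulVecLin c v).symm)
    rwa [hwc] at hw
  · intro h
    exact ⟨c • v, h, _root_.map_smul α.mulVecLin c v⟩

lemma map_stdFlag_succ (j : Fin n) :
    Submodule.map α.mulVecLin (stdFlag A n ((j : ℕ) + 1)) =
      Submodule.map α.mulVecLin (stdFlag A n j) ⊔
        Submodule.span A {α.mulVecLin ((Pi.single j 1 : Fin n → A))} := by
  rw [stdFlag_succ, Submodule.map_sup, Submodule.map_span, Set.image_singleton]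

end Mat

end Stmt3Aux

open Stmt3Aux in
theorem stmt3 {A : Type*} [CommRing A] [IsLocalRing A] [IsPrincipalIdealRing A]
    (π : A) (k : ℕ) (hmax : IsLocalRing.maximalIdeal A = Ideal.span {π})
    (hk0 : π ^ k = 0) (hk1 : π ^ (k - 1) ≠ 0)
    {n : ℕ} (α : Matrix (Fin n) (Fin n) A) (hα : IsUnit α) :
    ∃ r : Fin n → Fin n → ℕ,
      (∀ i j : Fin n, r i j ≤ k ∧
        Nonempty (interQuot A α ((i : ℕ) + 1) ((j : ℕ) + 1) ≃ₗ[A]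
          A ⧸ Ideal.span {π ^ r i j}) ∧
        (∀ r' : ℕ, r' ≤ k →
          Nonempty (interQuot A α ((i : ℕ) + 1) ((j : ℕ) + 1) ≃ₗ[A]
            A ⧸ Ideal.span {π ^ r'}) → r' = r i j)) ∧
      (∀ j : Fin n, ∑ i : Fin n, r i j = k) ∧
      (∀ i : Fin n, ∑ j : Fin n, r i j = k) := by
  classical
  obtain ⟨B, hB1, hB2⟩ : ∃ B, α * B = 1 ∧ B * α = 1 := by
    obtain ⟨u, hu⟩ := hα
    refine ⟨↑u⁻¹, ?_, ?_⟩
    · rw [← hu]; exact u.mul_inv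
    · rw [← hu]; exact u.inv_mul
  have hinj : Function.Injective α.mulVecLin := by
    intro x y hxy
    have h1 : (B * α).mulVecLin x = (B * α).mulVecLin y := by
      rw [Matrix.mulVecLin_mul]
      show B.mulVecLin (α.mulVecLin x) = B.mulVecLin (α.mulVecLin y)
      rw [hxy]
    rw [hB2, Matrix.mulVecLin_one] at h1
    exact h1
  have hmaptop : Submodule.map α.mulVecLin (⊤ : Submodule A (Fin n → A)) = ⊤ := by
    rw [Submodule.map_top, LinearMap.range_eq_top]
    intro y
    refine ⟨B.mulVecLin y, ?_⟩
    have h1 : α.mulVecLin (B.mulVecLin y) = (α * B).mulVecLin y := by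
      rw [Matrix.mulVecLin_mul]; rfl
    rw [h1, hB1, Matrix.mulVecLin_one]; rfl
  set F : ℕ → Submodule A (Fin n → A) :=
    fun t => Submodule.map α.mulVecLin (stdFlag A n t) with hF
  have hFmono : ∀ {a b : ℕ}, a ≤ b → F a ≤ F b :=
    fun h => Submodule.map_mono (stdFlag_mono h)
  set g : Fin n → (Fin n → A) := fun j => α.mulVecLin (Pi.single j 1 : Fin n → A) with hg
  set XR : Fin n → ℕ → Submodule A (Fin n → A) :=
    fun j i => F ((j : ℕ) + 1) ⊓ stdFlag A n i ⊔ F j with hXR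
  set XC : Fin n → ℕ → Submodule A (Fin n → A) :=
    fun i t => F t ⊓ stdFlag A n ((i : ℕ) + 1) ⊔ stdFlag A n i with hXC
  set eR : Fin n → ℕ → ℕ := fun j i => expo π k
    (Submodule.comap (LinearMap.toSpanSingleton A (Fin n → A) (g j)) (XR j i)) with heR
  set eC : Fin n → ℕ → ℕ := fun i t => expo π k
    (Submodule.comap (LinearMap.toSpanSingleton A (Fin n → A) (Pi.single i 1 : Fin n → A))
      (XC i t)) with heC
  have isoR : ∀ i j : Fin n, Nonempty (interQuot A α ((i : ℕ) + 1) ((j : ℕ) + 1) ≃ₗ[A]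
      (A ⧸ Ideal.span {π ^ (eR j i - eR j ((i : ℕ) + 1))})) := by
    intro i j
    set P : Submodule A (Fin n → A) :=
      F ((j : ℕ) + 1) ⊓ stdFlag A n ((i : ℕ) + 1) with hP
    set W : Submodule A (Fin n → A) :=
      F j ⊓ stdFlag A n ((i : ℕ) + 1) ⊔ F ((j : ℕ) + 1) ⊓ stdFlag A n i with hW
    have hWP : W ≤ P :=
      sup_le (inf_le_inf (hFmono (Nat.le_succ _)) le_rfl)
        (inf_le_inf le_rfl (stdFlag_mono (Nat.le_succ _)))
    have hPZW : P ⊓ F j ≤ W :=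
      (le_inf inf_le_right (inf_le_left.trans inf_le_right)).trans le_sup_left
    have hPle : P ≤ F j ⊔ Submodule.span A {g j} :=
      inf_le_left.trans (le_of_eq (map_stdFlag_succ j))
    have main := isoMain hk0 hk1 hmax (g j) (F j) P W hWP hPZW hPle
    have h1 : W ⊔ F j = XR j i := by
      simp only [hW, hXR]
      rw [sup_right_comm,
        sup_eq_right.mpr (inf_le_left : F (j : ℕ) ⊓ stdFlag A n ((i : ℕ) + 1) ≤ F (j : ℕ)),
        sup_comm (F (j : ℕ)) _]
    have h2 : P ⊔ F j = XR j ((i : ℕ) + 1) := by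
      simp only [hP, hXR]
    rw [h1, h2] at main
    exact main
  have isoC : ∀ i j : Fin n, Nonempty (interQuot A α ((i : ℕ) + 1) ((j : ℕ) + 1) ≃ₗ[A]
      (A ⧸ Ideal.span {π ^ (eC i j - eC i ((j : ℕ) + 1))})) := by
    intro i j
    set P : Submodule A (Fin n → A) :=
      F ((j : ℕ) + 1) ⊓ stdFlag A n ((i : ℕ) + 1) with hP
    set W : Submodule A (Fin n → A) :=
      F j ⊓ stdFlag A n ((i : ℕ) + 1) ⊔ F ((j : ℕ) + 1) ⊓ stdFlag A n i with hW
    have hWP : W ≤ P :=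
      sup_le (inf_le_inf (hFmono (Nat.le_succ _)) le_rfl)
        (inf_le_inf le_rfl (stdFlag_mono (Nat.le_succ _)))
    have hPZW : P ⊓ stdFlag A n i ≤ W :=
      (le_inf (inf_le_left.trans inf_le_left) inf_le_right).trans le_sup_right
    have hPle : P ≤ stdFlag A n i ⊔ Submodule.span A {(Pi.single i 1 : Fin n → A)} :=
      inf_le_right.trans (le_of_eq (stdFlag_succ i))
    have main := isoMain hk0 hk1 hmax (Pi.single i 1 : Fin n → A) (stdFlag A n i) P W
      hWP hPZW hPle
    have h1 : W ⊔ stdFlag A n i = XC i j := by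
      simp only [hW, hXC]
      rw [sup_assoc, sup_eq_right.mpr
        (inf_le_right : F ((j : ℕ) + 1) ⊓ stdFlag A n (i : ℕ) ≤ stdFlag A n (i : ℕ))]
    have h2 : P ⊔ stdFlag A n i = XC i ((j : ℕ) + 1) := by
      simp only [hP, hXC]
    rw [h1, h2] at main
    exact main
  have heR0 : ∀ j : Fin n, eR j 0 = k := by
    intro j
    have hX0 : XR j 0 = F j := by
      simp only [hXR]
      rw [stdFlag_zero, inf_bot_eq, bot_sup_eq]
    simp only [heR]
    rw [hX0]
    simp only [hF, hg]
    rw [comap_toSpan_map hinj, comap_single_stdFlag_self, expo_bot hk0 hk1 hmax]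
  have heRn : ∀ j : Fin n, eR j n = 0 := by
    intro j
    have hXn : XR j n = F ((j : ℕ) + 1) := by
      simp only [hXR]
      rw [stdFlag_top, inf_top_eq, sup_eq_left.mpr (hFmono (Nat.le_succ _))]
    simp only [heR]
    rw [hXn]
    simp only [hF, hg]
    rw [comap_toSpan_map hinj, comap_single_stdFlag_succ, expo_top hk0 hk1 hmax]
  have heRanti : ∀ (j : Fin n) (i : ℕ), eR j (i + 1) ≤ eR j i := by
    intro j i
    simp only [heR]
    apply expo_antitone hk0 hk1 hmax
    apply Submodule.comap_mono
    simp only [hXR]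
    exact sup_le_sup_right (inf_le_inf le_rfl (stdFlag_mono (Nat.le_succ _))) _
  have heC0 : ∀ i : Fin n, eC i 0 = k := by
    intro i
    have hX0 : XC i 0 = stdFlag A n i := by
      simp only [hXC, hF]
      rw [stdFlag_zero, Submodule.map_bot, bot_inf_eq, bot_sup_eq]
    simp only [heC]
    rw [hX0, comap_single_stdFlag_self, expo_bot hk0 hk1 hmax]
  have heCn : ∀ i : Fin n, eC i n = 0 := by
    intro i
    have hXn : XC i n = stdFlag A n ((i : ℕ) + 1) := by
      simp only [hXC, hF]
      rw [stdFlag_top, hmaptop, top_inf_eq, sup_eq_left.mpr (stdFlag_mono (Nat.le_succ _))]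
    simp only [heC]
    rw [hXn, comap_single_stdFlag_succ, expo_top hk0 hk1 hmax]
  have heCanti : ∀ (i : Fin n) (t : ℕ), eC i (t + 1) ≤ eC i t := by
    intro i t
    simp only [heC]
    apply expo_antitone hk0 hk1 hmax
    apply Submodule.comap_mono
    simp only [hXC]
    exact sup_le_sup_right (inf_le_inf (hFmono (Nat.le_succ _)) le_rfl) _
  have hboundR : ∀ (j : Fin n) (i : ℕ), eR j i ≤ k := by
    intro j i
    simp only [heR]
    exact expo_le hk0 hmax _
  have hboundC : ∀ (i : Fin n) (t : ℕ), eC i t ≤ k := by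
    intro i t
    simp only [heC]
    exact expo_le hk0 hmax _
  have req : ∀ i j : Fin n, eR j i - eR j ((i : ℕ) + 1) = eC i j - eC i ((j : ℕ) + 1) := by
    intro i j
    obtain ⟨e1⟩ := isoR i j
    obtain ⟨e2⟩ := isoC i j
    exact quot_iso_inj hk0 hk1 ((Nat.sub_le _ _).trans (hboundR j i))
      ((Nat.sub_le _ _).trans (hboundC i j)) (e1.symm.trans e2)
  refine ⟨fun i j => eR j i - eR j ((i : ℕ) + 1), fun i j => ⟨?_, ?_, ?_⟩, ?_, ?_⟩
  · exact (Nat.sub_le _ _).trans (hboundR j i)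
  · exact isoR i j
  · intro r' hr' hiso
    obtain ⟨e1⟩ := isoR i j
    obtain ⟨e2⟩ := hiso
    exact quot_iso_inj hk0 hk1 hr' ((Nat.sub_le _ _).trans (hboundR j i)) (e2.symm.trans e1)
  · intro j
    rw [Fin.sum_univ_eq_sum_range (fun i => eR j i - eR j (i + 1)) n]
    rw [telescope_sum _ (heRanti j) n, heR0 j, heRn j, Nat.sub_zero]
  · intro i
    have hcongr : ∀ j : Fin n, eR j (i : ℕ) - eR j ((i : ℕ) + 1) =
        eC i (j : ℕ) - eC i ((j : ℕ) + 1) := fun j => req i j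
    calc ∑ j : Fin n, (eR j (i : ℕ) - eR j ((i : ℕ) + 1))
        = ∑ j : Fin n, (eC i (j : ℕ) - eC i ((j : ℕ) + 1)) :=
          Finset.sum_congr rfl (fun j _ => hcongr j)
      _ = k := by
          rw [Fin.sum_univ_eq_sum_range (fun t => eC i t - eC i (t + 1)) n]
          rw [telescope_sum _ (heCanti i) n, heC0 i, heCn i, Nat.sub_zero]
end

section
/- Let A be a commutative local principal ideal ring of finite length k with maximal ideal (π), and let B ⊆ GL_2(A) be the group of invertible upper triangular matrices. Then the matrices [[1,0],[π^r,1]] for 0 ≤ r ≤ k form a complete set of representatives for the double coset space B\GL_2(A)/B; in particular the number of double cosets is exactly k+1. -/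
open Matrix

section Aux

variable {A : Type*} [CommRing A]

lemma mkUT {x y z : A} (hx : IsUnit x) (hz : IsUnit z) : IsUT !![x, y; 0, z] := by
  constructor
  · intro i j hij
    fin_cases i <;> fin_cases j <;> simp_all
  · rw [Matrix.isUnit_iff_isUnit_det, Matrix.det_fin_two_of]
    simpa using hx.mul hz

lemma ut_corner {M : Matrix (Fin 2) (Fin 2) A} (h : IsUT M) :
    M 1 0 = 0 ∧ IsUnit (M 0 0) ∧ IsUnit (M 1 1) := by
  have h10 : M 1 0 = 0 := h.1 (show (id (0 : Fin 2)) < id 1 by decide)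
  have hdet : IsUnit M.det := (Matrix.isUnit_iff_isUnit_det M).mp h.2
  rw [Matrix.det_fin_two, h10, mul_zero, sub_zero] at hdet
  exact ⟨h10, isUnit_of_mul_isUnit_left hdet, isUnit_of_mul_isUnit_right hdet⟩

/-- The invariant: the span of the lower-left entry. -/
lemma dc_span {α β : Matrix (Fin 2) (Fin 2) A} (h : SameDC α β) :
    Ideal.span {α 1 0} = Ideal.span {β 1 0} := by
  obtain ⟨b, c, hb, hc, heq⟩ := h
  obtain ⟨hb10, hb00, hb11⟩ := ut_corner hb
  obtain ⟨hc10, hc00, hc11⟩ := ut_corner hc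
  have hβ : β 1 0 = (b 1 1 * c 0 0) * α 1 0 := by
    rw [← heq]
    simp [Matrix.mul_apply, Fin.sum_univ_two, hb10, hc10]
    ring
  rw [hβ, Ideal.span_singleton_mul_left_unit (hb11.mul hc00)]

lemma pow_span_inj (π : A) (k : ℕ) (hk0 : π ^ k = 0) (hk1 : π ^ (k - 1) ≠ 0)
    {r r' : ℕ} (hr : r ≤ k) (hr' : r' ≤ k)
    (h : Ideal.span ({π ^ r} : Set A) = Ideal.span ({π ^ r'} : Set A)) : r = r' := by
  have key : ∀ s s' : ℕ, s' ≤ k → s < s' →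
      π ^ s ∈ Ideal.span ({π ^ s'} : Set A) → False := by
    intro s s' hs' hlt hmem
    obtain ⟨t, ht⟩ := Ideal.mem_span_singleton'.mp hmem
    have hsk : s ≤ k - 1 := Nat.le_sub_one_of_lt (lt_of_lt_of_le hlt hs')
    have h2 : π ^ (s' + (k - 1 - s)) = 0 := by
      have hge : k ≤ s' + (k - 1 - s) := by omega
      calc π ^ (s' + (k - 1 - s)) = π ^ k * π ^ (s' + (k - 1 - s) - k) := by
            rw [← pow_add, Nat.add_sub_cancel' hge]
        _ = 0 := by rw [hk0]; ring
    apply hk1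
    calc π ^ (k - 1) = π ^ s * π ^ (k - 1 - s) := by
          rw [← pow_add, Nat.add_sub_cancel' hsk]
      _ = (t * π ^ s') * π ^ (k - 1 - s) := by rw [ht]
      _ = t * π ^ (s' + (k - 1 - s)) := by rw [pow_add]; ring
      _ = 0 := by rw [h2]; ring
  rcases lt_trichotomy r r' with hlt | heq | hlt
  · exact absurd (h ▸ Ideal.mem_span_singleton_self (π ^ r)) (fun hm => (key r r' hr' hlt hm).elim)
  · exact heq
  · exact absurd (h ▸ Ideal.mem_span_singleton_self (π ^ r')) (fun hm => (key r' r hr hlt (h ▸ hm)).elim)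

end Aux

section Local

variable {A : Type*} [CommRing A] [IsLocalRing A]

lemma elem_form (π : A) (k : ℕ) (hmax : IsLocalRing.maximalIdeal A = Ideal.span {π})
    (hk0 : π ^ k = 0) (c : A) :
    ∃ r ≤ k, ∃ u : A, IsUnit u ∧ c = u * π ^ r := by
  classical
  rcases eq_or_ne c 0 with rfl | hc
  · exact ⟨k, le_rfl, 1, isUnit_one, by simp [hk0]⟩
  · have hwit : c ∉ Ideal.span ({π ^ (k + 1)} : Set A) := by
      rw [pow_succ, hk0, zero_mul, Ideal.mem_span_singleton, zero_dvd_iff]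
      exact hc
    have hex : ∃ n, c ∉ Ideal.span ({π ^ (n + 1)} : Set A) := ⟨k, hwit⟩
    set r := Nat.find hex with hr
    have hrk : r ≤ k := Nat.find_le hwit
    have hcr : c ∈ Ideal.span ({π ^ r} : Set A) := by
      rcases Nat.eq_zero_or_pos r with h0 | hpos
      · simp [h0, Ideal.span_singleton_one]
      · have := Nat.find_min hex (Nat.sub_lt hpos one_pos)
        rw [not_not] at this
        rw [← hr] at this
        rwa [show r - 1 + 1 = r by omega] at this
    obtain ⟨u, hu⟩ := Ideal.mem_span_singleton'.mp hcr
    refine ⟨r, hrk, u, ?_, hu.symm⟩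
    by_contra hnu
    have hum : u ∈ IsLocalRing.maximalIdeal A :=
      (IsLocalRing.mem_maximalIdeal u).mpr (mem_nonunits_iff.mpr hnu)
    rw [hmax, Ideal.mem_span_singleton'] at hum
    obtain ⟨s, hs⟩ := hum
    have hmem : c ∈ Ideal.span ({π ^ (r + 1)} : Set A) := by
      rw [Ideal.mem_span_singleton']
      exact ⟨s, by rw [← hu, ← hs, pow_succ]; ring⟩
    exact Nat.find_spec hex hmem

lemma isUnit_sub_mem {x y : A} (hx : IsUnit x)
    (hy : y ∈ IsLocalRing.maximalIdeal A) : IsUnit (x - y) := by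
  by_contra h
  have hm : x - y ∈ IsLocalRing.maximalIdeal A :=
    (IsLocalRing.mem_maximalIdeal _).mpr (mem_nonunits_iff.mpr h)
  have : x ∈ IsLocalRing.maximalIdeal A := by
    have := Ideal.add_mem _ hm hy
    simpa using this
  exact absurd this (IsLocalRing.notMem_maximalIdeal.mpr hx)

end Local

theorem stmt5 {A : Type*} [CommRing A] [IsLocalRing A] [IsPrincipalIdealRing A]
    (π : A) (k : ℕ) (hmax : IsLocalRing.maximalIdeal A = Ideal.span {π})
    (hk0 : π ^ k = 0) (hk1 : π ^ (k - 1) ≠ 0)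
    (α : Matrix (Fin 2) (Fin 2) A) (hα : IsUnit α) :
    ∃! r : Fin (k + 1), SameDC α !![1, 0; π ^ (r : ℕ), 1] := by
  obtain ⟨r0, hr0k, u, hu, hc⟩ := elem_form π k hmax hk0 (α 1 0)
  obtain ⟨u', hu'⟩ := hu.exists_right_inv
  have hdet : IsUnit (α 0 0 * α 1 1 - α 0 1 * α 1 0) := by
    have := (Matrix.isUnit_iff_isUnit_det α).mp hα
    rwa [Matrix.det_fin_two] at this
  have existsDC : SameDC α !![1, 0; π ^ r0, 1] := by
    rcases Nat.eq_zero_or_pos r0 with hr00 | hr0pos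
    · -- r0 = 0 : lower-left entry is a unit
      subst hr00
      have hc' : α 1 0 = u := by simpa using hc
      rw [hc'] at hdet
      obtain ⟨Δ', hΔ'⟩ := hdet.exists_right_inv
      refine ⟨!![u, (1 - u * α 0 0) * u'; 0, u'],
        !![1, -(u * α 0 1 + (1 - u * α 0 0) * u' * α 1 1) * Δ'; 0, Δ'],
        mkUT hu (IsUnit.of_mul_eq_one (a := u') u (by linear_combination hu')),
        mkUT isUnit_one (IsUnit.of_mul_eq_one (a := Δ') (α 0 0 * α 1 1 - α 0 1 * u) (by linear_combination hΔ')), ?_⟩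
      ext i j
      fin_cases i <;> fin_cases j <;>
        (simp only [Matrix.mul_apply, Fin.sum_univ_two]; simp [hc'])
      · linear_combination (1 - u * α 0 0) * hu'
      · linear_combination (-(u * α 0 1 + (1 - u * α 0 0) * u' * α 1 1) * Δ') * (1 - u * α 0 0) * hu'
      · linear_combination hu'
      · linear_combination hΔ' + (α 0 0 * α 1 1 * Δ' - u * α 0 1 * Δ'
          - (1 - u * α 0 0) * u' * α 1 1 * Δ') * hu'
    · -- r0 ≥ 1
      have hπr : π ^ r0 ∈ IsLocalRing.maximalIdeal A := by
        rw [hmax, Ideal.mem_span_singleton]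
        exact dvd_pow_self π hr0pos.ne'
      have hcm : α 1 0 ∈ IsLocalRing.maximalIdeal A := by
        rw [hc]; exact Ideal.mul_mem_left _ u hπr
      have had : IsUnit (α 0 0 * α 1 1) := by
        by_contra h
        have h1 : α 0 0 * α 1 1 ∈ IsLocalRing.maximalIdeal A :=
          (IsLocalRing.mem_maximalIdeal _).mpr (mem_nonunits_iff.mpr h)
        have h2 : α 0 1 * α 1 0 ∈ IsLocalRing.maximalIdeal A :=
          Ideal.mul_mem_left _ _ hcm
        have : α 0 0 * α 1 1 - α 0 1 * α 1 0 ∈ IsLocalRing.maximalIdeal A :=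
          Submodule.sub_mem _ h1 h2
        exact absurd this (IsLocalRing.notMem_maximalIdeal.mpr hdet)
      have ha : IsUnit (α 0 0) := isUnit_of_mul_isUnit_left had
      have hd : IsUnit (α 1 1) := isUnit_of_mul_isUnit_right had
      obtain ⟨a', ha'⟩ := ha.exists_right_inv
      have hd' : IsUnit (u' * α 1 1 - π ^ r0 * α 0 1 * a') := by
        refine isUnit_sub_mem ((IsUnit.of_mul_eq_one (a := u') u (by linear_combination hu')).mul hd) ?_
        exact Ideal.mul_mem_right _ _ (Ideal.mul_mem_right _ _ hπr)
      obtain ⟨e, he⟩ := hd'.exists_right_inv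
      refine ⟨!![a', 0; 0, u'], !![1, -(α 0 1) * a' * e; 0, e],
        mkUT (IsUnit.of_mul_eq_one (a := a') (α 0 0) (by linear_combination ha'))
          (IsUnit.of_mul_eq_one (a := u') u (by linear_combination hu')),
        mkUT isUnit_one (IsUnit.of_mul_eq_one (a := e) (u' * α 1 1 - π ^ r0 * α 0 1 * a') (by linear_combination he)), ?_⟩
      ext i j
      fin_cases i <;> fin_cases j <;>
        (simp only [Matrix.mul_apply, Fin.sum_univ_two]; simp [hc])
      · linear_combination ha'
      · linear_combination (-(a' * α 0 1 * e)) * ha'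
      · linear_combination (π ^ r0) * hu'
      · linear_combination he - (π ^ r0 * α 0 1 * a' * e) * hu'
  refine ⟨⟨r0, Nat.lt_succ_of_le hr0k⟩, by simpa using existsDC, ?_⟩
  intro y hy
  have h1 := dc_span hy
  have h2 := dc_span existsDC
  have hy10 : (!![1, 0; π ^ (y : ℕ), 1] : Matrix (Fin 2) (Fin 2) A) 1 0 = π ^ (y : ℕ) := by simp
  have hr10 : (!![1, 0; π ^ r0, 1] : Matrix (Fin 2) (Fin 2) A) 1 0 = π ^ r0 := by simp
  rw [hy10] at h1
  rw [hr10] at h2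
  have := pow_span_inj π k hk0 hk1 (Nat.lt_succ_iff.mp y.isLt) hr0k (h1.symm.trans h2)
  exact Fin.ext this
end

section
/- Let A be a commutative local principal ideal ring of finite length k with maximal ideal (π), let i, j, l be integers with k > j > max{i,l} ≥ min{i,l} > 0 and j ≠ i + l, and let a, a' ∈ A be units. Set ε = min{j−i, j−l, i, l} and α(a) = [[π^i, 1],[π^j a, π^l]]. Then there exist invertible upper triangular 2×2 matrices X, Y over A with X·α(a) = α(a')·Y if and only if a ≡ a' mod π^{min{ε, k−j}}. -/
open Matrix

section Helpers
variable {A : Type*} [CommRing A] [IsLocalRing A]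

lemma unit_add_of_dvd (π : A) (hπ : ¬ IsUnit π) {w z : A} (hw : IsUnit w) (hz : π ∣ z) :
    IsUnit (w + z) := by
  obtain ⟨u, rfl⟩ := hw
  obtain ⟨t, rfl⟩ := hz
  have hnz : ¬ IsUnit ((↑u⁻¹ : A) * (π * t)) := fun h =>
    hπ (isUnit_of_mul_isUnit_left (isUnit_of_mul_isUnit_right h))
  have h1 : IsUnit (1 - (-((↑u⁻¹ : A) * (π * t)))) :=
    IsLocalRing.isUnit_one_sub_self_of_mem_nonunits _ (fun h => hnz (by simpa using h.neg))
  have heq : (↑u : A) + π * t = ↑u * (1 - (-((↑u⁻¹ : A) * (π * t)))) := by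
    linear_combination (-(π * t)) * u.mul_inv
  rw [heq]
  exact u.isUnit.mul h1

lemma ann_pow (π : A) (k : ℕ) (hmax : IsLocalRing.maximalIdeal A = Ideal.span {π})
    (hk1 : π ^ (k - 1) ≠ 0) :
    ∀ d, d ≤ k → ∀ x : A, π ^ (k - d) * x = 0 → π ^ d ∣ x := by
  intro d
  induction d with
  | zero => intro _ x _; simpa using one_dvd x
  | succ d ih =>
    intro hdk x hx
    have hstep : π ^ (k - d) * x = 0 := by
      have h : π ^ (k - d) = π * π ^ (k - (d + 1)) := by
        rw [← pow_succ']; congr 1; omega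
      rw [h, mul_assoc, hx, mul_zero]
    obtain ⟨y, hy⟩ := ih (Nat.le_of_succ_le hdk) x hstep
    have h2 : π ^ (k - 1) * y = 0 := by
      have h : π ^ (k - 1) = π ^ (k - (d + 1)) * π ^ d := by
        rw [← pow_add]; congr 1; omega
      rw [h, mul_assoc, ← hy, hx]
    have hyn : y ∈ nonunits A := by
      intro hu
      obtain ⟨v, rfl⟩ := hu
      exact hk1 (by
        have := congrArg (· * (↑v⁻¹ : A)) h2
        simpa [mul_assoc, Units.mul_inv_cancel_right] using this)
    have hdvd : π ∣ y := by
      rw [← Ideal.mem_span_singleton, ← hmax]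
      exact hyn
    obtain ⟨z, hz⟩ := hdvd
    exact ⟨z, by rw [hy, hz, pow_succ]; ring⟩

lemma construct (π : A) (i j l : ℕ) (hπ : ¬ IsUnit π)
    (hij : i < j) (hlj : l < j) (hi : 0 < i) (hl : 0 < l)
    (a a' x2 y2 : A)
    (hsolve : π ^ j * a * (1 + x2 * (π ^ l - π ^ (j - i) * a) - (π ^ i - π ^ (j - l) * a') * y2)
      = π ^ j * a') :
    ∃ X Y : Matrix (Fin 2) (Fin 2) A, IsUT X ∧ IsUT Y ∧
        X * !![π ^ i, 1; π ^ j * a, π ^ l] = !![π ^ i, 1; π ^ j * a', π ^ l] * Y := by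
  have h1 : π ^ (j - i) * π ^ i = π ^ j := by rw [← pow_add]; congr 1; omega
  have h2 : π ^ (j - l) * π ^ l = π ^ j := by rw [← pow_add]; congr 1; omega
  set x1 : A := 1 - x2 * π ^ (j - i) * a with hx1
  set x4 : A := 1 + x2 * (π ^ l - π ^ (j - i) * a) - (π ^ i - π ^ (j - l) * a') * y2 with hx4
  set y4 : A := x4 - π ^ (j - l) * a' * y2 with hy4
  have hux1 : IsUnit x1 := by
    have hd : π ∣ -(x2 * π ^ (j - i) * a) :=
      dvd_neg.mpr (((dvd_pow_self π (by omega : j - i ≠ 0)).mul_left x2).mul_right a)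
    have := unit_add_of_dvd π hπ isUnit_one hd
    have e : (1 : A) + -(x2 * π ^ (j - i) * a) = x1 := by rw [hx1]; ring
    rwa [e] at this
  have hux4 : IsUnit x4 := by
    have hdz : π ∣ (x2 * (π ^ l - π ^ (j - i) * a) - (π ^ i - π ^ (j - l) * a') * y2) := by
      have d1 : π ∣ π ^ l := dvd_pow_self π hl.ne'
      have d2 : π ∣ π ^ (j - i) := dvd_pow_self π (by omega : j - i ≠ 0)
      have d3 : π ∣ π ^ i := dvd_pow_self π hi.ne'
      have d4 : π ∣ π ^ (j - l) := dvd_pow_self π (by omega : j - l ≠ 0)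
      exact dvd_sub ((dvd_sub d1 (d2.mul_right a)).mul_left x2)
        ((dvd_sub d3 (d4.mul_right a')).mul_right y2)
    have := unit_add_of_dvd π hπ isUnit_one hdz
    have e : (1 : A) + (x2 * (π ^ l - π ^ (j - i) * a) - (π ^ i - π ^ (j - l) * a') * y2) = x4 := by
      rw [hx4]; ring
    rwa [e] at this
  have huy4 : IsUnit y4 := by
    have hdz : π ∣ (x2 * (π ^ l - π ^ (j - i) * a) - (π ^ i - π ^ (j - l) * a') * y2
        - π ^ (j - l) * a' * y2) := by
      have d1 : π ∣ π ^ l := dvd_pow_self π hl.ne'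
      have d2 : π ∣ π ^ (j - i) := dvd_pow_self π (by omega : j - i ≠ 0)
      have d3 : π ∣ π ^ i := dvd_pow_self π hi.ne'
      have d4 : π ∣ π ^ (j - l) := dvd_pow_self π (by omega : j - l ≠ 0)
      exact dvd_sub (dvd_sub ((dvd_sub d1 (d2.mul_right a)).mul_left x2)
        ((dvd_sub d3 (d4.mul_right a')).mul_right y2)) ((d4.mul_right a').mul_right y2)
    have := unit_add_of_dvd π hπ isUnit_one hdz
    have e : (1 : A) + (x2 * (π ^ l - π ^ (j - i) * a) - (π ^ i - π ^ (j - l) * a') * y2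
        - π ^ (j - l) * a' * y2) = y4 := by rw [hy4, hx4]; ring
    rwa [e] at this
  refine ⟨!![x1, x2; 0, x4], !![1, y2; 0, y4], ⟨?_, ?_⟩, ⟨?_, ?_⟩, ?_⟩
  · intro p q h; fin_cases p <;> fin_cases q <;> simp_all
  · rw [Matrix.isUnit_iff_isUnit_det, Matrix.det_fin_two_of]
    simpa using hux1.mul hux4
  · intro p q h; fin_cases p <;> fin_cases q <;> simp_all
  · rw [Matrix.isUnit_iff_isUnit_det, Matrix.det_fin_two_of]
    simpa using huy4
  · ext p q
    fin_cases p <;> fin_cases q <;>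
      simp [Matrix.mul_apply, Fin.sum_univ_two]
    · linear_combination (-(x2 * a)) * h1
    · rw [hy4, hx4, hx1]; ring
    · linear_combination hsolve
    · rw [hy4]; linear_combination (a' * y2) * h2

end Helpers

theorem stmt7 {A : Type*} [CommRing A] [IsLocalRing A] [IsPrincipalIdealRing A]
    (π : A) (k i j l : ℕ) (hmax : IsLocalRing.maximalIdeal A = Ideal.span {π})
    (hk0 : π ^ k = 0) (hk1 : π ^ (k - 1) ≠ 0)
    (hjk : j < k) (hij : i < j) (hlj : l < j) (hi : 0 < i) (hl : 0 < l)
    (hne : j ≠ i + l) (a a' : A) (ha : IsUnit a) (ha' : IsUnit a') :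
    (∃ X Y : Matrix (Fin 2) (Fin 2) A, IsUT X ∧ IsUT Y ∧
        X * !![π ^ i, 1; π ^ j * a, π ^ l] = !![π ^ i, 1; π ^ j * a', π ^ l] * Y) ↔
      π ^ min (min (min (j - i) (j - l)) (min i l)) (k - j) ∣ (a - a') := by
  have hπ : ¬ IsUnit π := by
    intro h
    have := h.pow (n := k)
    rw [hk0] at this
    exact not_isUnit_zero this
  set e : ℕ := min (min (j - i) (j - l)) (min i l) with he
  have hei : e ≤ j - i := by omega
  have hel : e ≤ j - l := by omega
  have hei' : e ≤ i := by omega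
  have hel' : e ≤ l := by omega
  constructor
  · rintro ⟨X, Y, hX, hY, heq⟩
    have hX10 : X 1 0 = 0 := hX.1 (by simp)
    have hY10 : Y 1 0 = 0 := hY.1 (by simp)
    have hy4 : IsUnit (Y 1 1) := by
      have hYu := hY.2
      rw [Matrix.isUnit_iff_isUnit_det, Matrix.det_fin_two, hY10] at hYu
      simpa using isUnit_of_mul_isUnit_right (by simpa using hYu)
    have E00 := congrFun (congrFun heq 0) 0
    have E01 := congrFun (congrFun heq 0) 1
    have E10 := congrFun (congrFun heq 1) 0
    have E11 := congrFun (congrFun heq 1) 1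
    simp [Matrix.mul_apply, Fin.sum_univ_two, hX10, hY10] at E00 E01 E10 E11
    have h1 : π ^ (j - i) * π ^ i = π ^ j := by rw [← pow_add]; congr 1; omega
    have h2 : π ^ (j - l) * π ^ l = π ^ j := by rw [← pow_add]; congr 1; omega
    have key : π ^ j * (Y 1 1) * (a - a') =
        π ^ (j - i) * π ^ j * a * a' * (X 0 1) - π ^ (j - l) * π ^ j * a * a' * (Y 0 1)
        + π ^ i * π ^ j * a' * (Y 0 1) - π ^ l * π ^ j * a' * (X 0 1) := by
      linear_combination E10 - a * π ^ (j - l) * E11 - a' * π ^ (j - i) * E00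
        + a' * π ^ j * E01 + (a * (X 1 1 - Y 1 1)) * h2 + (a' * (X 0 0 - Y 0 0)) * h1
    have hdvd : π ^ (j + e) ∣ π ^ j * (Y 1 1) * (a - a') := by
      rw [key]
      have d1 : π ^ (j + e) ∣ π ^ (j - i) * π ^ j := by
        rw [← pow_add]; exact pow_dvd_pow π (by omega)
      have d2 : π ^ (j + e) ∣ π ^ (j - l) * π ^ j := by
        rw [← pow_add]; exact pow_dvd_pow π (by omega)
      have d3 : π ^ (j + e) ∣ π ^ i * π ^ j := by
        rw [← pow_add]; exact pow_dvd_pow π (by omega)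
      have d4 : π ^ (j + e) ∣ π ^ l * π ^ j := by
        rw [← pow_add]; exact pow_dvd_pow π (by omega)
      exact dvd_sub (dvd_add (dvd_sub (((d1.mul_right a).mul_right a').mul_right _)
        (((d2.mul_right a).mul_right a').mul_right _)) ((d3.mul_right a').mul_right _))
        ((d4.mul_right a').mul_right _)
    obtain ⟨s, hs⟩ := hdvd
    obtain ⟨u, hu⟩ := hy4
    have hann : π ^ (k - (k - j)) * ((a - a') - π ^ e * ((↑u⁻¹ : A) * s)) = 0 := by
      have hkj : k - (k - j) = j := by omega
      rw [hkj]
      have hpe : π ^ (j + e) = π ^ j * π ^ e := by rw [← pow_add]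
      rw [← hu] at hs
      have huu : (↑u : A) * ↑u⁻¹ = 1 := u.mul_inv
      linear_combination (↑u⁻¹ : A) * hs + ((↑u⁻¹ : A) * s) * hpe
        - (π ^ j * (a - a')) * huu
    obtain ⟨r, hr⟩ := ann_pow π k hmax hk1 (k - j) (by omega) _ hann
    have hsum : a - a' = π ^ e * ((↑u⁻¹ : A) * s) + π ^ (k - j) * r := by
      linear_combination hr
    rw [hsum]
    exact dvd_add ((pow_dvd_pow π (min_le_left e (k - j))).mul_right _)
      ((pow_dvd_pow π (min_le_right e (k - j))).mul_right _)
  · rintro ⟨c, hc⟩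
    by_cases hke : k - j ≤ e
    · have hm : min e (k - j) = k - j := by omega
      rw [hm] at hc
      have h0 : π ^ j * (a - a') = 0 := by
        rw [hc, ← mul_assoc, ← pow_add]
        have : j + (k - j) = k := by omega
        rw [this, hk0, zero_mul]
      exact construct π i j l hπ hij hlj hi hl a a' 0 0 (by linear_combination h0)
    · have hm : min e (k - j) = e := by omega
      rw [hm] at hc
      obtain ⟨av, hav⟩ := ha.exists_right_inv
      have hnel : j - i ≠ l := by omega
      have hnei : j - l ≠ i := by omega
      rcases le_total (min (j - i) l) (min (j - l) i) with hA | hB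
      · rcases lt_or_gt_of_ne hnel with hlt | hgt
        · -- j - i < l, e = j - i
          have hee : e = j - i := by omega
          have hu : IsUnit (π ^ (i + l - j) - a) := by
            have := unit_add_of_dvd π hπ ha.neg (dvd_pow_self π (by omega : i + l - j ≠ 0))
            have ee : -a + π ^ (i + l - j) = π ^ (i + l - j) - a := by ring
            rwa [ee] at this
          obtain ⟨uv, huv⟩ := hu.exists_right_inv
          refine construct π i j l hπ hij hlj hi hl a a' (-(av * uv * c)) 0 ?_
          have hsp : π ^ l = π ^ (j - i) * π ^ (i + l - j) := by
            rw [← pow_add]; congr 1; omega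
          rw [hee] at hc
          linear_combination (π ^ j) * hc - (π ^ j * π ^ (j - i) * c) * hav
            - (π ^ j * π ^ (j - i) * a * av * c) * huv + (π ^ j * a * (-(av * uv * c))) * hsp
        · -- l < j - i, e = l
          have hee : e = l := by omega
          have hu : IsUnit ((1 : A) - π ^ (j - i - l) * a) := by
            have := unit_add_of_dvd π hπ isUnit_one
              (dvd_neg.mpr ((dvd_pow_self π (by omega : j - i - l ≠ 0)).mul_right a))
            have ee : (1 : A) + -(π ^ (j - i - l) * a) = 1 - π ^ (j - i - l) * a := by ring
            rwa [ee] at this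
          obtain ⟨uv, huv⟩ := hu.exists_right_inv
          refine construct π i j l hπ hij hlj hi hl a a' (-(av * uv * c)) 0 ?_
          have hsp : π ^ (j - i) = π ^ (j - i - l) * π ^ l := by
            rw [← pow_add]; congr 1; omega
          rw [hee] at hc
          linear_combination (π ^ j) * hc - (π ^ j * π ^ l * c) * hav
            - (π ^ j * π ^ l * a * av * c) * huv - (π ^ j * a * a * (-(av * uv * c))) * hsp
      · rcases lt_or_gt_of_ne hnei with hlt | hgt
        · -- j - l < i, e = j - l
          have hee : e = j - l := by omega
          have hu : IsUnit (π ^ (i + l - j) - a') := by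
            have := unit_add_of_dvd π hπ ha'.neg (dvd_pow_self π (by omega : i + l - j ≠ 0))
            have ee : -a' + π ^ (i + l - j) = π ^ (i + l - j) - a' := by ring
            rwa [ee] at this
          obtain ⟨uv, huv⟩ := hu.exists_right_inv
          refine construct π i j l hπ hij hlj hi hl a a' 0 (av * uv * c) ?_
          have hsp : π ^ i = π ^ (j - l) * π ^ (i + l - j) := by
            rw [← pow_add]; congr 1; omega
          rw [hee] at hc
          linear_combination (π ^ j) * hc - (π ^ j * π ^ (j - l) * c) * hav
            - (π ^ j * π ^ (j - l) * a * av * c) * huv - (π ^ j * a * (av * uv * c)) * hsp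
        · -- i < j - l, e = i
          have hee : e = i := by omega
          have hu : IsUnit ((1 : A) - π ^ (j - l - i) * a') := by
            have := unit_add_of_dvd π hπ isUnit_one
              (dvd_neg.mpr ((dvd_pow_self π (by omega : j - l - i ≠ 0)).mul_right a'))
            have ee : (1 : A) + -(π ^ (j - l - i) * a') = 1 - π ^ (j - l - i) * a' := by ring
            rwa [ee] at this
          obtain ⟨uv, huv⟩ := hu.exists_right_inv
          refine construct π i j l hπ hij hlj hi hl a a' 0 (av * uv * c) ?_
          have hsp : π ^ (j - l) = π ^ (j - l - i) * π ^ i := by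
            rw [← pow_add]; congr 1; omega
          rw [hee] at hc
          linear_combination (π ^ j) * hc - (π ^ j * π ^ i * c) * hav
            - (π ^ j * π ^ i * a * av * c) * huv + (π ^ j * a * a' * (av * uv * c)) * hsp
end

section
/- Let A be a commutative local principal ideal ring of finite length k with maximal ideal (π), let i, j, l be integers with k > j > max{i,l} ≥ min{i,l} > 0 and j = i + l, and let a, a' ∈ A be units. Set ε = min{j−i, j−l, i, l} = min{i, l}, and for a unit u let δ(u) = v(u − 1) be the π-adic valuation of u − 1 (with δ(u) = k if u = 1). Then there exist invertible upper triangular 2×2 matrices X, Y over A with X·[[π^i,1],[π^j a, π^l]] = [[π^i,1],[π^j a', π^l]]·Y if and only if min{δ(a), k−j} = min{δ(a'), k−j} and a ≡ a' mod π^{min{ε + δ(a), k−j}}. -/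
open Matrix

/-- The valuation of `x`, truncated at the length `k`: the largest `m ≤ k` with
`π ^ m ∣ x`.  In particular `pval π k 0 = k`. -/
noncomputable def pval {A : Type*} [CommRing A] (π : A) (k : ℕ) (x : A) : ℕ :=
  sSup {m : ℕ | m ≤ k ∧ π ^ m ∣ x}

section Aux

variable {A : Type*} [CommRing A] (π : A) (k : ℕ) (x : A)

lemma pval_mem : pval π k x ≤ k ∧ π ^ pval π k x ∣ x := by
  have h : sSup {m : ℕ | m ≤ k ∧ π ^ m ∣ x} ∈ {m : ℕ | m ≤ k ∧ π ^ m ∣ x} :=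
    Nat.sSup_mem ⟨0, by simp⟩ ⟨k, fun m hm => hm.1⟩
  exact h

lemma pval_le : pval π k x ≤ k := (pval_mem π k x).1

lemma pow_pval_dvd : π ^ pval π k x ∣ x := (pval_mem π k x).2

lemma le_pval {m : ℕ} (hm : m ≤ k) (h : π ^ m ∣ x) : m ≤ pval π k x :=
  le_csSup ⟨k, fun n hn => hn.1⟩ ⟨hm, h⟩

lemma not_dvd_pval_succ (hlt : pval π k x < k) : ¬ π ^ (pval π k x + 1) ∣ x := fun h =>
  absurd (le_pval π k x hlt h) (by omega)

variable [IsLocalRing A]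

lemma exists_unit_pval (hmax : IsLocalRing.maximalIdeal A = Ideal.span {π})
    (hlt : pval π k x < k) :
    ∃ u : A, IsUnit u ∧ x = π ^ pval π k x * u := by
  have hnd := not_dvd_pval_succ π k x hlt
  obtain ⟨c, hc⟩ := pow_pval_dvd π k x
  set m := pval π k x with hm
  refine ⟨c, ?_, hc⟩
  by_contra hc'
  have hmem : c ∈ Ideal.span {π} := by
    rw [← hmax]; exact hc'
  obtain ⟨d, hd⟩ := Ideal.mem_span_singleton'.mp hmem
  exact hnd ⟨d, by rw [hc, ← hd, pow_succ]; ring⟩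

lemma ann_dvd (hmax : IsLocalRing.maximalIdeal A = Ideal.span {π})
    (hk0 : π ^ k = 0) (hk1 : π ^ (k-1) ≠ 0) {l : ℕ} (hlk : l ≤ k) {y : A}
    (h : π ^ l * y = 0) : π ^ (k - l) ∣ y := by
  by_cases hy : pval π k y < k
  · obtain ⟨u, hu, huy⟩ := exists_unit_pval π k y hmax hy
    have h2 : π ^ (l + pval π k y) * u = 0 := by
      rw [pow_add, mul_assoc, ← huy, h]
    have h3 : π ^ (l + pval π k y) = 0 := by
      obtain ⟨v, hv1⟩ := hu.exists_left_inv
      calc π ^ (l + pval π k y) = π ^ (l + pval π k y) * u * v := by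
            rw [mul_assoc, mul_comm u v, hv1, mul_one]
      _ = 0 := by rw [h2, zero_mul]
    have h4 : k ≤ l + pval π k y := by
      by_contra h5
      refine hk1 ?_
      have he : π ^ (k-1) = π ^ (l + pval π k y) * π ^ (k - 1 - (l + pval π k y)) := by
        rw [← pow_add]; congr 1; omega
      rw [he, h3, zero_mul]
    exact dvd_trans (pow_dvd_pow π (by omega)) (pow_pval_dvd π k y)
  · have h0 : π ^ k ∣ y := dvd_trans (pow_dvd_pow π (by omega)) (pow_pval_dvd π k y)
    rw [hk0, zero_dvd_iff] at h0
    rw [h0]; exact dvd_zero _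

lemma isUT_of_entries {x1 x2 x3 : A} (h1 : IsUnit x1) (h3 : IsUnit x3) :
    IsUT !![x1, x2; 0, x3] := by
  constructor
  · intro p q h
    fin_cases p <;> fin_cases q <;> simp_all
  · rw [Matrix.isUnit_iff_isUnit_det, Matrix.det_fin_two_of]
    simpa using h1.mul h3

lemma nil_aux (hk0 : π ^ k = 0) {i : ℕ} (hi : 0 < i) (w : A) :
    IsNilpotent (π ^ i * w) := by
  refine ⟨k, ?_⟩
  rw [mul_pow, ← pow_mul]
  have h : π ^ (i * k) = 0 := by
    have hik : k ≤ i * k := Nat.le_mul_of_pos_left k hi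
    rw [show i * k = k + (i * k - k) by omega, pow_add, hk0, zero_mul]
  rw [h, zero_mul]

end Aux

theorem stmt8 {A : Type*} [CommRing A] [IsLocalRing A] [IsPrincipalIdealRing A]
    (π : A) (k i j l : ℕ) (hmax : IsLocalRing.maximalIdeal A = Ideal.span {π})
    (hk0 : π ^ k = 0) (hk1 : π ^ (k - 1) ≠ 0)
    (hjk : j < k) (hij : i < j) (hlj : l < j) (hi : 0 < i) (hl : 0 < l)
    (hsum : j = i + l) (a a' : A) (ha : IsUnit a) (ha' : IsUnit a') :
    (∃ X Y : Matrix (Fin 2) (Fin 2) A, IsUT X ∧ IsUT Y ∧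
        X * !![π ^ i, 1; π ^ j * a, π ^ l] = !![π ^ i, 1; π ^ j * a', π ^ l] * Y) ↔
      (min (pval π k (a - 1)) (k - j) = min (pval π k (a' - 1)) (k - j) ∧
        π ^ min (min (min (j - i) (j - l)) (min i l) + pval π k (a - 1)) (k - j) ∣
          (a - a')) := by
  have hji : π ^ j = π ^ i * π ^ l := by rw [hsum, pow_add]
  set δ := pval π k (a - 1) with hδ
  set δ' := pval π k (a' - 1) with hδ'
  have hδk : δ ≤ k := pval_le π k _
  have hδ'k : δ' ≤ k := pval_le π k _
  have hda : π ^ δ ∣ a - 1 := pow_pval_dvd π k _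
  have hda' : π ^ δ' ∣ a' - 1 := pow_pval_dvd π k _
  constructor
  · rintro ⟨X, Y, ⟨hXt, hXu⟩, ⟨hYt, hYu⟩, hXY⟩
    -- extract entries
    have hX10 : X 1 0 = 0 := hXt (by norm_num)
    have hY10 : Y 1 0 = 0 := hYt (by norm_num)
    have hdetX : IsUnit X.det := (Matrix.isUnit_iff_isUnit_det X).mp hXu
    rw [Matrix.det_fin_two, hX10, mul_zero, sub_zero] at hdetX
    have hx3u : IsUnit (X 1 1) := isUnit_of_mul_isUnit_right hdetX
    have e00 : (X * !![π ^ i, 1; π ^ j * a, π ^ l]) 0 0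
        = (!![π ^ i, 1; π ^ j * a', π ^ l] * Y) 0 0 := by rw [hXY]
    have e01 : (X * !![π ^ i, 1; π ^ j * a, π ^ l]) 0 1
        = (!![π ^ i, 1; π ^ j * a', π ^ l] * Y) 0 1 := by rw [hXY]
    have e10 : (X * !![π ^ i, 1; π ^ j * a, π ^ l]) 1 0
        = (!![π ^ i, 1; π ^ j * a', π ^ l] * Y) 1 0 := by rw [hXY]
    have e11 : (X * !![π ^ i, 1; π ^ j * a, π ^ l]) 1 1
        = (!![π ^ i, 1; π ^ j * a', π ^ l] * Y) 1 1 := by rw [hXY]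
    simp [Matrix.mul_apply, Fin.sum_univ_two, hX10, hY10] at e00 e01 e10 e11
    set x1 := X 0 0; set x2 := X 0 1; set x3 := X 1 1
    set y1 := Y 0 0; set y2 := Y 0 1; set y3 := Y 1 1
    -- derived equations
    have h1 : π ^ i * (x1 - y1 + π ^ l * (a * x2)) = 0 := by
      rw [hji] at e00; linear_combination e00
    obtain ⟨s, hs⟩ := ann_dvd π k hmax hk0 hk1 (by omega : i ≤ k) h1
    have h4 : π ^ l * (x3 - y3 - π ^ i * (a' * y2)) = 0 := by
      rw [hji] at e11; linear_combination e11
    obtain ⟨t, ht⟩ := ann_dvd π k hmax hk0 hk1 (by omega : l ≤ k) h4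
    have h3 : π ^ j * (x3 * a - a' * y1) = 0 := by linear_combination e10
    obtain ⟨c, hc⟩ := ann_dvd π k hmax hk0 hk1 (by omega : j ≤ k) h3
    obtain ⟨da, hdae⟩ := id hda
    obtain ⟨da', hda'e⟩ := id hda'
    have key : x3 * (a - a') = π ^ (k - j) * c + π ^ (l + δ) * (a' * x2 * da)
        - π ^ (k - i) * (a' * s) - π ^ (k - l) * (a' * t)
        - π ^ (i + δ') * (a' * y2 * da') := by
      rw [pow_add, pow_add]
      linear_combination hc + a' * e01 - a' * hs - a' * ht
        + (a' * π ^ l * x2) * hdae - (a' * π ^ i * y2) * hda'e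
    have hM : π ^ min (min (i + δ') (l + δ)) (k - j) ∣ a - a' := by
      obtain ⟨v, hv⟩ := hx3u.exists_left_inv
      have h5 : π ^ min (min (i + δ') (l + δ)) (k - j) ∣ x3 * (a - a') := by
        rw [key]
        refine dvd_sub (dvd_sub (dvd_sub (dvd_add ?_ ?_) ?_) ?_) ?_ <;>
          exact Dvd.dvd.mul_right (pow_dvd_pow π (by omega)) _
      have h6 : a - a' = v * (x3 * (a - a')) := by
        rw [← mul_assoc, hv, one_mul]
      rw [h6]; exact h5.mul_left v
    -- number theory
    have S1 : ¬ (δ < δ' ∧ δ < k - j) := by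
      rintro ⟨hdd, hdk⟩
      have hd1 : π ^ (δ + 1) ∣ a - a' :=
        dvd_trans (pow_dvd_pow π (show δ + 1 ≤ min (min (i + δ') (l + δ)) (k - j) by omega)) hM
      have hd2 : π ^ (δ + 1) ∣ a' - 1 :=
        dvd_trans (pow_dvd_pow π (show δ + 1 ≤ δ' by omega)) hda'
      have hd3 : π ^ (δ + 1) ∣ a - 1 := by
        have := dvd_add hd1 hd2
        convert this using 1; ring
      exact absurd (le_pval π k (a - 1) (by omega) hd3) (by omega)
    have S2 : ¬ (δ' < δ ∧ δ' < k - j) := by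
      rintro ⟨hdd, hdk⟩
      have hd1 : π ^ (δ' + 1) ∣ a - a' :=
        dvd_trans (pow_dvd_pow π (show δ' + 1 ≤ min (min (i + δ') (l + δ)) (k - j) by omega)) hM
      have hd2 : π ^ (δ' + 1) ∣ a - 1 :=
        dvd_trans (pow_dvd_pow π (show δ' + 1 ≤ δ by omega)) hda
      have hd3 : π ^ (δ' + 1) ∣ a' - 1 := by
        have := dvd_sub hd2 hd1
        convert this using 1; ring
      exact absurd (le_pval π k (a' - 1) (by omega) hd3) (by omega)
    have hmineq : min δ (k - j) = min δ' (k - j) := by omega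
    refine ⟨hmineq, ?_⟩
    have hE : min (min (min (j - i) (j - l)) (min i l) + δ) (k - j)
        = min (min (i + δ') (l + δ)) (k - j) := by omega
    rw [hE]; exact hM
  · rintro ⟨hmineq, hdvd⟩
    have hE : min (min (min (j - i) (j - l)) (min i l) + δ) (k - j)
        = min (min (i + δ') (l + δ)) (k - j) := by omega
    rw [hE] at hdvd
    obtain ⟨b', hb'⟩ := ha'.exists_right_inv
    have hb'u : IsUnit b' := IsUnit.of_mul_eq_one (a := b') a' (by linear_combination hb')
    by_cases hA : k - j ≤ i + δ' ∧ k - j ≤ l + δ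
    · -- case A : use identity matrices
      have hco : min (min (i + δ') (l + δ)) (k - j) = k - j := by omega
      rw [hco] at hdvd
      obtain ⟨c, hc⟩ := hdvd
      have hMM : π ^ j * a = π ^ j * a' := by
        have hz : π ^ j * (a - a') = 0 := by
          rw [hc, ← mul_assoc, ← pow_add, show j + (k - j) = k by omega, hk0, zero_mul]
        linear_combination hz
      refine ⟨1, 1, ⟨Matrix.blockTriangular_one, isUnit_one⟩,
        ⟨Matrix.blockTriangular_one, isUnit_one⟩, ?_⟩
      rw [one_mul, mul_one, hMM]
    · rcases le_or_gt (i + δ') (l + δ) with hB1 | hB2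
      · -- case B1
        have hlt : i + δ' < k - j := by omega
        have hco : min (min (i + δ') (l + δ)) (k - j) = i + δ' := by omega
        rw [hco] at hdvd
        obtain ⟨c, hc⟩ := hdvd
        obtain ⟨d', hd'u, hd'e⟩ := exists_unit_pval π k (a' - 1) hmax (by omega)
        rw [← hδ'] at hd'e
        obtain ⟨dinv, hdinv⟩ := hd'u.exists_right_inv
        set y2 : A := -(b' * dinv * c) with hy2
        set y1 : A := b' * a with hy1
        set y3 : A := 1 - π ^ i * (a' * y2) with hy3
        have hy1u : IsUnit y1 := hb'u.mul ha
        have hy3u : IsUnit y3 := by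
          have hn : IsNilpotent (-(π ^ i * (a' * y2))) :=
            (nil_aux π k hk0 hi (a' * y2)).neg
          have := hn.isUnit_add_left_of_commute isUnit_one (Commute.all _ _)
          convert this using 1
          rw [hy3]; ring
        refine ⟨!![y1, 0; 0, 1], !![y1, y2; 0, y3],
          isUT_of_entries hy1u isUnit_one, isUT_of_entries hy1u hy3u, ?_⟩
        ext p q
        fin_cases p <;> fin_cases q <;>
          simp [Matrix.mul_apply, Fin.sum_univ_two]
        · ring
        · -- y1 = π^i*y2 + y3
          rw [hy3, hy1, hy2]
          rw [pow_add] at hc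
          linear_combination hb' + b' * hc + (π ^ i * (-(b' * dinv * c))) * hd'e
            - (π ^ i * π ^ δ' * b' * c) * hdinv
        · linear_combination (-(π ^ j * a)) * hb'
        · rw [hy3]; linear_combination (-(a' * y2)) * hji
      · -- case B2
        have hlt : l + δ < k - j := by omega
        have hco : min (min (i + δ') (l + δ)) (k - j) = l + δ := by omega
        rw [hco] at hdvd
        obtain ⟨c, hc⟩ := hdvd
        obtain ⟨e, heu, hee⟩ := exists_unit_pval π k (a - 1) hmax (by omega)
        rw [← hδ] at hee
        obtain ⟨einv, heinv⟩ := heu.exists_right_inv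
        set x2 : A := b' * einv * c with hx2
        set y1 : A := b' * a with hy1
        set x1 : A := y1 - π ^ l * (a * x2) with hx1
        have hy1u : IsUnit y1 := hb'u.mul ha
        have hx1u : IsUnit x1 := by
          have hn : IsNilpotent (-(π ^ l * (a * x2))) :=
            (nil_aux π k hk0 hl (a * x2)).neg
          have := hn.isUnit_add_left_of_commute hy1u (Commute.all _ _)
          convert this using 1
          rw [hx1]; ring
        refine ⟨!![x1, x2; 0, 1], !![y1, 0; 0, 1],
          isUT_of_entries hx1u isUnit_one, isUT_of_entries hy1u isUnit_one, ?_⟩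
        ext p q
        fin_cases p <;> fin_cases q <;>
          simp [Matrix.mul_apply, Fin.sum_univ_two]
        · rw [hx1]; linear_combination (a * x2) * hji
        · rw [hx1, hy1, hx2]
          rw [pow_add] at hc
          linear_combination hb' + b' * hc - (π ^ l * (b' * einv * c)) * hee
            - (π ^ l * π ^ δ * b' * c) * heinv
        · linear_combination (-(π ^ j * a)) * hb'
end

section
/- Let A be a commutative local principal ideal ring of finite length k ≥ 2 with maximal ideal (π) and residue field 𝐤, and let B ⊆ GL_4(A) denote the invertible upper triangular matrices. For a ∈ A, let M(a) be the 4×4 block matrix [[σ, 0],[τ(a), σ]] where σ = [[0,1],[1,0]] and τ(a) = [[π, aπ],[π, π]]. If k = 2, then M(a) and M(a') lie in the same double coset B·M(a)·B = B·M(a')·B if and only if a ≡ a' mod π. -/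
open Matrix

/-- Diagonal entries of an invertible upper triangular matrix are units. -/
lemma isUnit_diag_of_isUT {A : Type*} [CommRing A] {n : ℕ} {M : Matrix (Fin n) (Fin n) A}
    (h : IsUT M) (i : Fin n) : IsUnit (M i i) := by
  have hdet : IsUnit M.det := (Matrix.isUnit_iff_isUnit_det M).mp h.2
  rw [Matrix.det_of_upperTriangular h.1] at hdet
  exact isUnit_of_dvd_unit (Finset.dvd_prod_of_mem (fun j => M j j) (Finset.mem_univ i)) hdet

theorem stmt9 {A : Type*} [CommRing A] [IsLocalRing A] [IsPrincipalIdealRing A]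
    (π : A) (hmax : IsLocalRing.maximalIdeal A = Ideal.span {π})
    (h2 : π ^ 2 = 0) (h1 : π ≠ 0) (a a' : A) :
    SameDC !![0, 1, 0, 0; 1, 0, 0, 0; π, a * π, 0, 1; π, π, 1, 0]
        !![0, 1, 0, 0; 1, 0, 0, 0; π, a' * π, 0, 1; π, π, 1, 0] ↔
      π ∣ (a - a') := by
  constructor
  · rintro ⟨b, c, hb, hc, hM⟩
    have b10 : b 1 0 = 0 := hb.1 (i := 1) (j := 0) (by decide)
    have b20 : b 2 0 = 0 := hb.1 (i := 2) (j := 0) (by decide)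
    have b21 : b 2 1 = 0 := hb.1 (i := 2) (j := 1) (by decide)
    have b30 : b 3 0 = 0 := hb.1 (i := 3) (j := 0) (by decide)
    have b31 : b 3 1 = 0 := hb.1 (i := 3) (j := 1) (by decide)
    have b32 : b 3 2 = 0 := hb.1 (i := 3) (j := 2) (by decide)
    have c10 : c 1 0 = 0 := hc.1 (i := 1) (j := 0) (by decide)
    have c20 : c 2 0 = 0 := hc.1 (i := 2) (j := 0) (by decide)
    have c21 : c 2 1 = 0 := hc.1 (i := 2) (j := 1) (by decide)
    have c30 : c 3 0 = 0 := hc.1 (i := 3) (j := 0) (by decide)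
    have c31 : c 3 1 = 0 := hc.1 (i := 3) (j := 1) (by decide)
    have c32 : c 3 2 = 0 := hc.1 (i := 3) (j := 2) (by decide)
    obtain ⟨y, hy⟩ := isUnit_iff_exists_inv.mp (isUnit_diag_of_isUT hb 1)
    obtain ⟨w, hw⟩ := isUnit_iff_exists_inv.mp (isUnit_diag_of_isUT hc 2)
    obtain ⟨z, hz⟩ := isUnit_iff_exists_inv.mp (isUnit_diag_of_isUT hc 0)
    have E11 := congrFun (congrFun hM 1) 1
    have E20 := congrFun (congrFun hM 2) 0
    have E21 := congrFun (congrFun hM 2) 1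
    have E22 := congrFun (congrFun hM 2) 2
    have E30 := congrFun (congrFun hM 3) 0
    have E31 := congrFun (congrFun hM 3) 1
    simp [Matrix.mul_apply, Fin.sum_univ_four, Matrix.vecHead, Matrix.vecTail,
      b10, b20, b21, b30, b31, b32, c10, c20, c21, c30, c31, c32] at E11 E20 E21 E22 E30 E31
    have S1 : π * c 0 1 = 0 := by
      linear_combination (π * y) * E11 - (π * c 0 1) * hy -
        (y * ((b 1 2 + b 1 3) * c 0 1 + (b 1 2 * a + b 1 3) * c 1 1)) * h2
    have S2 : π * b 2 3 = 0 := by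
      linear_combination (π * w) * E22 - (π * b 2 3) * hw -
        (w * ((b 2 2 + b 2 3) * c 0 2 + (b 2 2 * a + b 2 3) * c 1 2)) * h2
    have S3 : π * b 2 2 = π * b 3 3 := by
      linear_combination z * E20 - z * E30 - (π * (b 2 2 + b 2 3 - b 3 3)) * hz - S2
    have S4 : π * b 3 3 * c 1 1 = π := by
      linear_combination E31 - (b 3 3) * S1
    have key : (a - a') * π = 0 := by
      linear_combination E21 - (b 2 2 + b 2 3) * S1 - (c 1 1) * S2 - (a * c 1 1) * S3 - a * S4
    by_cases hu : IsUnit (a - a')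
    · exfalso
      obtain ⟨v, hv⟩ := isUnit_iff_exists_inv.mp hu
      exact h1 (by linear_combination v * key - π * hv)
    · have hmem : a - a' ∈ IsLocalRing.maximalIdeal A := hu
      rw [hmax, Ideal.mem_span_singleton] at hmem
      exact hmem
  · rintro ⟨t, ht⟩
    have hpi : a * π = a' * π := by linear_combination π * ht + t * h2
    refine ⟨1, 1, ⟨blockTriangular_one, isUnit_one⟩, ⟨blockTriangular_one, isUnit_one⟩, ?_⟩
    rw [one_mul, mul_one, hpi]
end

section
/- Let A be a commutative local principal ideal ring of length k = 2 with finite residue field 𝐤, and let B ⊆ GL_4(A) be the invertible upper triangular matrices. Then there are at least |𝐤| distinct double cosets in B\GL_4(A)/B whose reduction modulo the maximal ideal lies in the double coset of the permutation matrix w = (1 2)(3 4) in GL_4(𝐤). -/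
open Matrix

lemma diagUnit {A : Type*} [CommRing A] {M : Matrix (Fin 4) (Fin 4) A} (h : IsUT M)
    (i : Fin 4) : IsUnit (M i i) := by
  have hdet : IsUnit M.det := (Matrix.isUnit_iff_isUnit_det M).mp h.2
  rw [Matrix.det_of_upperTriangular h.1, Fin.prod_univ_four] at hdet
  fin_cases i
  · exact isUnit_of_mul_isUnit_left (isUnit_of_mul_isUnit_left (isUnit_of_mul_isUnit_left hdet))
  · exact isUnit_of_mul_isUnit_right
      (isUnit_of_mul_isUnit_left (isUnit_of_mul_isUnit_left hdet))
  · exact isUnit_of_mul_isUnit_right (isUnit_of_mul_isUnit_left hdet)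
  · exact isUnit_of_mul_isUnit_right hdet

theorem stmt10 {A : Type*} [CommRing A] [IsLocalRing A] [IsPrincipalIdealRing A]
    (π : A) (hmax : IsLocalRing.maximalIdeal A = Ideal.span {π})
    (h2 : π ^ 2 = 0) (h1 : π ≠ 0)
    [Finite (A ⧸ IsLocalRing.maximalIdeal A)] :
    ∃ f : (A ⧸ IsLocalRing.maximalIdeal A) → Matrix (Fin 4) (Fin 4) A,
      (∀ x, IsUnit (f x)) ∧
      (∀ x, SameDC ((f x).map (Ideal.Quotient.mk (IsLocalRing.maximalIdeal A)))
          !![0, 1, 0, 0; 1, 0, 0, 0; 0, 0, 0, 1; 0, 0, 1, 0]) ∧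
      (∀ x y, SameDC (f x) (f y) → x = y) := by
  set I := IsLocalRing.maximalIdeal A with hI
  obtain ⟨l, hl⟩ : ∃ l : (A ⧸ I) → A, ∀ x, Ideal.Quotient.mk I (l x) = x :=
    ⟨fun x => (Ideal.Quotient.mk_surjective x).choose,
     fun x => (Ideal.Quotient.mk_surjective x).choose_spec⟩
  have hpp : π * π = 0 := by rw [← pow_two]; exact h2
  have hmk : ∀ u v : A, π * u = π * v → Ideal.Quotient.mk I u = Ideal.Quotient.mk I v := by
    intro u v huv
    rw [Ideal.Quotient.eq]
    by_contra hne
    have hu : IsUnit (u - v) := by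
      by_contra h
      exact hne ((IsLocalRing.mem_maximalIdeal _).mpr h)
    obtain ⟨w, hw⟩ := hu.exists_left_inv
    have hz : π * (u - v) = 0 := by rw [mul_sub, huv, sub_self]
    exact h1 (by calc π = π * ((u - v) * w) := by rw [mul_comm (u-v) w, hw, mul_one]
      _ = (π * (u - v)) * w := by ring
      _ = 0 := by rw [hz, zero_mul])
  have hmkpi : Ideal.Quotient.mk I π = 0 := by
    rw [Ideal.Quotient.eq_zero_iff_mem, hmax]
    exact Ideal.mem_span_singleton_self π
  refine ⟨fun x => !![0, 1, 0, 0; 1, 0, 0, 0; π, π, 0, 1; π, π * l x, 1, 0], ?_, ?_, ?_⟩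
  · intro x
    rw [Matrix.isUnit_iff_isUnit_det]
    have hd : Matrix.det !![0, 1, 0, 0; 1, 0, 0, 0; π, π, 0, 1; π, π * l x, 1, 0] = 1 := by
      simp [Matrix.det_succ_row_zero, Fin.sum_univ_succ, Fin.succAbove]
    rw [hd]; exact isUnit_one
  · intro x
    have hmap : (!![0, 1, 0, 0; 1, 0, 0, 0; π, π, 0, 1; π, π * l x, 1, 0]).map
        (Ideal.Quotient.mk I) = !![0, 1, 0, 0; 1, 0, 0, 0; 0, 0, 0, 1; 0, 0, 1, 0] := by
      ext i j
      fin_cases i <;> fin_cases j <;>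
        simp [Matrix.map_apply, hmkpi, Matrix.vecHead, Matrix.vecTail]
    rw [hmap]
    exact ⟨1, 1, ⟨Matrix.blockTriangular_one, isUnit_one⟩,
      ⟨Matrix.blockTriangular_one, isUnit_one⟩, by simp⟩
  · intro x y hxy
    obtain ⟨b, c, hb, hc, heq⟩ := hxy
    have zb10 : b 1 0 = 0 := hb.1 (i := 1) (j := 0) (by decide)
    have zb20 : b 2 0 = 0 := hb.1 (i := 2) (j := 0) (by decide)
    have zb21 : b 2 1 = 0 := hb.1 (i := 2) (j := 1) (by decide)
    have zb30 : b 3 0 = 0 := hb.1 (i := 3) (j := 0) (by decide)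
    have zb31 : b 3 1 = 0 := hb.1 (i := 3) (j := 1) (by decide)
    have zb32 : b 3 2 = 0 := hb.1 (i := 3) (j := 2) (by decide)
    have zc10 : c 1 0 = 0 := hc.1 (i := 1) (j := 0) (by decide)
    have zc20 : c 2 0 = 0 := hc.1 (i := 2) (j := 0) (by decide)
    have zc21 : c 2 1 = 0 := hc.1 (i := 2) (j := 1) (by decide)
    have zc30 : c 3 0 = 0 := hc.1 (i := 3) (j := 0) (by decide)
    have zc31 : c 3 1 = 0 := hc.1 (i := 3) (j := 1) (by decide)
    have zc32 : c 3 2 = 0 := hc.1 (i := 3) (j := 2) (by decide)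
    have E11 := congrFun (congrFun heq 1) 1
    have E22 := congrFun (congrFun heq 2) 2
    have E20 := congrFun (congrFun heq 2) 0
    have E21 := congrFun (congrFun heq 2) 1
    have E30 := congrFun (congrFun heq 3) 0
    have E31 := congrFun (congrFun heq 3) 1
    simp [Matrix.mul_apply, Fin.sum_univ_four, Matrix.vecHead, Matrix.vecTail,
      zb10, zb20, zb21, zb30, zb31, zb32, zc10, zc20, zc21, zc30, zc31, zc32]
      at E11 E22 E20 E21 E30 E31
    obtain ⟨b11i, hb11i⟩ := (diagUnit hb 1).exists_left_inv
    obtain ⟨b22i, hb22i⟩ := (diagUnit hb 2).exists_left_inv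
    obtain ⟨c22i, hc22i⟩ := (diagUnit hc 2).exists_left_inv
    set t := l x
    set s := l y
    have s1 : π * c 0 1 = 0 := by
      linear_combination (π * b11i) * E11 - (π * c 0 1) * hb11i -
        (b11i * ((b 1 2 + b 1 3) * c 0 1 + (b 1 2 + b 1 3 * t) * c 1 1)) * hpp
    have s2 : π * b 2 3 = 0 := by
      linear_combination (π * c22i) * E22 - (π * b 2 3) * hc22i -
        (c22i * ((b 2 2 + b 2 3) * c 0 2 + (b 2 2 + b 2 3 * t) * c 1 2)) * hpp
    have s3 : π * (b 2 2 * c 0 0) = π := by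
      linear_combination E20 - c 0 0 * s2
    have s4 : π * (b 2 2 * c 1 1) = π := by
      linear_combination E21 - (b 2 2 + b 2 3) * s1 - (t * c 1 1) * s2
    have s5 : π * c 1 1 = π * c 0 0 := by
      linear_combination b22i * s4 - b22i * s3 - (π * (c 1 1 - c 0 0)) * hb22i
    have s6 : π * s = π * t := by
      linear_combination (-1 : A) * E31 + b 3 3 * s1 + t * E30 + (b 3 3 * t) * s5
    have := hmk _ _ s6
    rw [hl x, hl y] at this
    exact this.symm
end

section
/- Let A be a commutative local principal ideal ring with maximal ideal (π), and let α ∈ GL_3(A) reduce modulo π to the permutation matrix of the transposition s₁ = (1 2) (i.e., the matrix [[0,1,0],[1,0,0],[0,0,1]]). Then α lies in the same double coset (for the upper triangular subgroup B) as a matrix of the form [[0,1,0],[1,0,0],[π^i, π^j, 1]] for some 1 ≤ i, j ≤ k, where k is the length of A (with the convention π^k = 0). -/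
open Matrix

section aux
variable {A : Type*} [CommRing A] {n : ℕ}

lemma isUT_one : IsUT (1 : Matrix (Fin n) (Fin n) A) :=
  ⟨Matrix.blockTriangular_one, isUnit_one⟩

lemma IsUT.mul' {M N : Matrix (Fin n) (Fin n) A} (hM : IsUT M) (hN : IsUT N) :
    IsUT (M * N) := ⟨hM.1.mul hN.1, hM.2.mul hN.2⟩

lemma sameDC_trans {α β γ : Matrix (Fin n) (Fin n) A}
    (h1 : SameDC α β) (h2 : SameDC β γ) : SameDC α γ := by
  obtain ⟨b1, c1, hb1, hc1, rfl⟩ := h1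
  obtain ⟨b2, c2, hb2, hc2, rfl⟩ := h2
  exact ⟨b2 * b1, c1 * c2, hb2.mul' hb1, hc1.mul' hc2, by noncomm_ring⟩

lemma sameDC_left {M E : Matrix (Fin n) (Fin n) A} (hE : IsUT E) :
    SameDC M (E * M) := ⟨E, 1, hE, isUT_one, by simp⟩

lemma sameDC_right {M E : Matrix (Fin n) (Fin n) A} (hE : IsUT E) :
    SameDC M (M * E) := ⟨1, E, isUT_one, hE, by simp⟩

lemma sameDC_pair {M D D' : Matrix (Fin n) (Fin n) A} (hD : IsUT D) (hD' : IsUT D') :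
    SameDC M (D * M * D') := ⟨D, D', hD, hD', rfl⟩

lemma isUT_fin3 {a b c d e f : A} (h : IsUnit (a * d * f)) :
    IsUT !![a, b, c; 0, d, e; 0, 0, f] := by
  constructor
  · intro i j hij
    fin_cases i <;> fin_cases j <;>
      simp_all [Fin.lt_def, Matrix.cons_val_zero, Matrix.cons_val_one, Matrix.vecHead, Matrix.vecTail, Function.comp]
  · rw [Matrix.isUnit_iff_isUnit_det]
    have : (!![a, b, c; 0, d, e; 0, 0, f] : Matrix (Fin 3) (Fin 3) A).det = a * d * f := by
      rw [Matrix.det_fin_three]; norm_num [Matrix.cons_val_zero, Matrix.cons_val_one, Matrix.cons_val_two, Matrix.vecHead, Matrix.vecTail, Function.comp]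
    rw [this]; exact h

end aux

section local_aux
variable {A : Type*} [CommRing A] [IsLocalRing A]

lemma isUnit_of_quot_ne_zero {x : A}
    (h : Ideal.Quotient.mk (IsLocalRing.maximalIdeal A) x ≠ 0) : IsUnit x := by
  by_contra hx
  exact h (Ideal.Quotient.eq_zero_iff_mem.mpr ((IsLocalRing.mem_maximalIdeal _).mpr hx))

lemma isUnit_add_of_mem {x y : A} (hx : IsUnit x)
    (hy : y ∈ IsLocalRing.maximalIdeal A) : IsUnit (x + y) := by
  by_contra h
  have h1 : x + y ∈ IsLocalRing.maximalIdeal A := (IsLocalRing.mem_maximalIdeal _).mpr h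
  have h2 : x ∈ IsLocalRing.maximalIdeal A := by
    have := Ideal.sub_mem _ h1 hy
    simpa using this
  exact ((IsLocalRing.mem_maximalIdeal _).mp h2) hx

lemma exists_unit_pow_rep_aux (π : A) (k : ℕ)
    (hmax : IsLocalRing.maximalIdeal A = Ideal.span {π}) (hk0 : π ^ k = 0) :
    ∀ t (a : A), π ^ (k - t) ∣ a →
      ∃ i ε, k - t ≤ i ∧ i ≤ k ∧ IsUnit ε ∧ a = ε * π ^ i := by
  intro t
  induction t with
  | zero =>
    rintro a ⟨y, rfl⟩
    exact ⟨k, 1, by omega, le_refl _, isUnit_one, by simp [hk0]⟩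
  | succ t ih =>
    rintro a ⟨y, rfl⟩
    by_cases hu : IsUnit y
    · exact ⟨k - (t + 1), y, le_refl _, Nat.sub_le _ _, hu, mul_comm _ _⟩
    · have hy : y ∈ IsLocalRing.maximalIdeal A := (IsLocalRing.mem_maximalIdeal _).mpr hu
      rw [hmax, Ideal.mem_span_singleton] at hy
      obtain ⟨z, rfl⟩ := hy
      have hdvd : π ^ (k - t) ∣ π ^ (k - (t + 1)) * (π * z) := by
        have h1 : π ^ (k - (t + 1)) * (π * z) = π ^ (k - (t + 1) + 1) * z := by ring
        rw [h1]
        exact Dvd.dvd.mul_right (pow_dvd_pow π (by omega)) z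
      obtain ⟨i, ε, hi1, hi2, hε, heq⟩ := ih _ hdvd
      exact ⟨i, ε, by omega, hi2, hε, heq⟩

lemma exists_unit_pow_rep (π : A) (k : ℕ)
    (hmax : IsLocalRing.maximalIdeal A = Ideal.span {π}) (hk0 : π ^ k = 0)
    (hk : 1 ≤ k) {a : A} (ha : a ∈ IsLocalRing.maximalIdeal A) :
    ∃ i ε, 1 ≤ i ∧ i ≤ k ∧ IsUnit ε ∧ a = ε * π ^ i := by
  rw [hmax, Ideal.mem_span_singleton] at ha
  have : π ^ (k - (k - 1)) ∣ a := by
    have : k - (k - 1) = 1 := by omega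
    rw [this, pow_one]
    obtain ⟨z, rfl⟩ := ha
    exact Dvd.intro z rfl
  obtain ⟨i, ε, hi1, hi2, hε, heq⟩ := exists_unit_pow_rep_aux π k hmax hk0 (k - 1) a this
  exact ⟨i, ε, by omega, hi2, hε, heq⟩

end local_aux

set_option maxHeartbeats 1600000 in
theorem stmt13 {A : Type*} [CommRing A] [IsLocalRing A] [IsPrincipalIdealRing A]
    (π : A) (k : ℕ) (hmax : IsLocalRing.maximalIdeal A = Ideal.span {π})
    (hk0 : π ^ k = 0) (hk1 : π ^ (k - 1) ≠ 0)
    (α : Matrix (Fin 3) (Fin 3) A) (hα : IsUnit α)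
    (hred : SameDC (α.map (Ideal.Quotient.mk (IsLocalRing.maximalIdeal A)))
      !![0, 1, 0; 1, 0, 0; 0, 0, 1]) :
    ∃ i j : ℕ, 1 ≤ i ∧ i ≤ k ∧ 1 ≤ j ∧ j ≤ k ∧
      SameDC α !![0, 1, 0; 1, 0, 0; π ^ i, π ^ j, 1] := by
  have hk : 1 ≤ k := by
    rcases Nat.eq_zero_or_pos k with h | h
    · subst h; simp at hk0
    · exact h
  obtain ⟨b, c, ⟨hbt, hbu⟩, ⟨hct, hcu⟩, hbc⟩ := hred
  set q := Ideal.Quotient.mk (IsLocalRing.maximalIdeal A) with hq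
  have hb10 : b 1 0 = 0 := hbt (show (id (0:Fin 3)) < id 1 by decide)
  have hb20 : b 2 0 = 0 := hbt (show (id (0:Fin 3)) < id 2 by decide)
  have hb21 : b 2 1 = 0 := hbt (show (id (1:Fin 3)) < id 2 by decide)
  have hc10 : c 1 0 = 0 := hct (show (id (0:Fin 3)) < id 1 by decide)
  have hc20 : c 2 0 = 0 := hct (show (id (0:Fin 3)) < id 2 by decide)
  have hc21 : c 2 1 = 0 := hct (show (id (1:Fin 3)) < id 2 by decide)
  have hbdet : b.det ≠ 0 := ((Matrix.isUnit_iff_isUnit_det b).mp hbu).ne_zero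
  have hcdet : c.det ≠ 0 := ((Matrix.isUnit_iff_isUnit_det c).mp hcu).ne_zero
  rw [Matrix.det_fin_three] at hbdet hcdet
  simp [hb10, hb20, hb21] at hbdet
  simp [hc10, hc20, hc21] at hcdet
  have e20 := congrFun (congrFun hbc 2) 0
  have e21 := congrFun (congrFun hbc 2) 1
  have e22 := congrFun (congrFun hbc 2) 2
  have e10 := congrFun (congrFun hbc 1) 0
  have e00 := congrFun (congrFun hbc 0) 0
  have e01 := congrFun (congrFun hbc 0) 1
  simp [Matrix.mul_apply, Fin.sum_univ_three, Matrix.map_apply, hb10, hb20, hb21, hc10,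
    hc20, hc21, Matrix.vecHead, Matrix.vecTail, Function.comp] at e20 e21 e22 e10 e00 e01
  -- reduction conditions
  have hq20 : q (α 2 0) = 0 := (e20.resolve_right hcdet.1.1).resolve_left hbdet.2
  have hq21 : q (α 2 1) = 0 := by
    have h : b 2 2 * (q (α 2 1) * c 1 1) = 0 := by
      linear_combination e21 - (b 2 2 * c 0 1) * hq20
    rcases mul_eq_zero.mp h with h | h
    · exact absurd h hbdet.2
    rcases mul_eq_zero.mp h with h | h
    · exact h
    · exact absurd h hcdet.1.2
  have hq22 : q (α 2 2) ≠ 0 := by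
    intro h0; rw [hq20, hq21, h0] at e22; simp at e22
  have hq10 : q (α 1 0) ≠ 0 := by
    intro h0; rw [hq20, h0] at e10; simp at e10
  have hE00 : b 0 0 * q (α 0 0) + b 0 1 * q (α 1 0) + b 0 2 * q (α 2 0) = 0 :=
    e00.resolve_right hcdet.1.1
  have hE00' : b 0 0 * q (α 0 0) + b 0 1 * q (α 1 0) = 0 := by
    linear_combination hE00 - (b 0 2) * hq20
  have key : b 0 0 * (q (α 0 0) * q (α 1 1) - q (α 0 1) * q (α 1 0)) * c 1 1
      = - q (α 1 0) := by
    linear_combination (-(q (α 1 0))) * e01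
      + (q (α 1 1) * c 1 1 + c 0 1 * q (α 1 0)) * hE00'
      + (c 0 1 * q (α 1 0) * b 0 2) * hq20 + (q (α 1 0) * b 0 2 * c 1 1) * hq21
  have hminor : q (α 0 0) * q (α 1 1) - q (α 0 1) * q (α 1 0) ≠ 0 := by
    intro h0
    rw [h0] at key
    simp at key
    exact hq10 key
  -- lift to A
  have hm20 : α 2 0 ∈ IsLocalRing.maximalIdeal A := Ideal.Quotient.eq_zero_iff_mem.mp hq20
  have hm21 : α 2 1 ∈ IsLocalRing.maximalIdeal A := Ideal.Quotient.eq_zero_iff_mem.mp hq21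
  have hu10 : IsUnit (α 1 0) := isUnit_of_quot_ne_zero hq10
  have hu22 : IsUnit (α 2 2) := isUnit_of_quot_ne_zero hq22
  have huΔ : IsUnit (α 0 0 * α 1 1 - α 0 1 * α 1 0) := by
    apply isUnit_of_quot_ne_zero
    simpa [map_sub, _root_.map_mul] using hminor
  have hup01 : IsUnit (α 1 0 * α 0 1 - α 1 1 * α 0 0) := by
    have h := huΔ.neg
    convert h using 1; ring
  have hm_p21 : (α 1 0 * α 2 1 - α 1 1 * α 2 0) ∈ IsLocalRing.maximalIdeal A :=
    Ideal.sub_mem _ (Ideal.mul_mem_left _ _ hm21) (Ideal.mul_mem_left _ _ hm20)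
  have huq22 : IsUnit (α 1 0 * α 2 2 - α 1 2 * α 2 0) := by
    have h := isUnit_add_of_mem (hu10.mul hu22)
      ((IsLocalRing.maximalIdeal A).neg_mem (Ideal.mul_mem_left _ (α 1 2) hm20))
    convert h using 1; ring
  have hur01 : IsUnit ((α 1 0 * α 2 2 - α 1 2 * α 2 0) * (α 1 0 * α 0 1 - α 1 1 * α 0 0) - (α 1 0 * α 0 2 - α 1 2 * α 0 0) * (α 1 0 * α 2 1 - α 1 1 * α 2 0)) := by
    have h := isUnit_add_of_mem (huq22.mul hup01)
      ((IsLocalRing.maximalIdeal A).neg_mem (Ideal.mul_mem_left _ (α 1 0 * α 0 2 - α 1 2 * α 0 0) hm_p21))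
    convert h using 1; ring
  have hus01 : IsUnit (α 1 0 * ((α 1 0 * α 2 2 - α 1 2 * α 2 0) * (α 1 0 * α 0 1 - α 1 1 * α 0 0) - (α 1 0 * α 0 2 - α 1 2 * α 0 0) * (α 1 0 * α 2 1 - α 1 1 * α 2 0))) := hu10.mul hur01
  -- factorizations
  obtain ⟨i, ε, hi1, hik, hε, ha20⟩ := exists_unit_pow_rep π k hmax hk0 hk hm20
  obtain ⟨j, δ, hj1, hjk, hδ, hp21⟩ := exists_unit_pow_rep π k hmax hk0 hk hm_p21
  obtain ⟨u10inv, hu10inv⟩ := hu10.exists_right_inv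
  obtain ⟨q22inv, hq22inv⟩ := huq22.exists_right_inv
  obtain ⟨s01inv, hs01inv⟩ := hus01.exists_right_inv
  obtain ⟨εinv, hεinv⟩ := hε.exists_right_inv
  obtain ⟨δinv, hδinv⟩ := hδ.exists_right_inv
  have inv_unit : ∀ {x y : A}, x * y = 1 → IsUnit y := fun h =>
    IsUnit.of_mul_eq_one _ (by rwa [mul_comm] at h)
  refine ⟨i, j, hi1, hik, hj1, hjk, ?_⟩
  -- step 1
  have S1 : SameDC α
      !![α 0 0, (α 1 0 * α 0 1 - α 1 1 * α 0 0), α 0 2; α 1 0, 0, α 1 2; α 2 0, (α 1 0 * α 2 1 - α 1 1 * α 2 0), α 2 2] := by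
    refine ⟨1, !![1, -(α 1 1), 0; 0, α 1 0, 0; 0, 0, 1], isUT_one,
      isUT_fin3 (by simpa using hu10), ?_⟩
    rw [Matrix.one_mul]
    ext r s
    fin_cases r <;> fin_cases s <;>
      simp [Matrix.mul_apply, Fin.sum_univ_three, Matrix.vecHead, Matrix.vecTail, Function.comp] <;> ring
  -- step 2
  have S2 : SameDC
      !![α 0 0, (α 1 0 * α 0 1 - α 1 1 * α 0 0), α 0 2; α 1 0, 0, α 1 2; α 2 0, (α 1 0 * α 2 1 - α 1 1 * α 2 0), α 2 2]
      !![α 0 0, (α 1 0 * α 0 1 - α 1 1 * α 0 0), (α 1 0 * α 0 2 - α 1 2 * α 0 0); α 1 0, 0, 0; α 2 0, (α 1 0 * α 2 1 - α 1 1 * α 2 0), (α 1 0 * α 2 2 - α 1 2 * α 2 0)] := by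
    refine ⟨1, !![1, 0, -(α 1 2); 0, 1, 0; 0, 0, α 1 0], isUT_one,
      isUT_fin3 (by simpa using hu10), ?_⟩
    rw [Matrix.one_mul]
    ext r s
    fin_cases r <;> fin_cases s <;>
      simp [Matrix.mul_apply, Fin.sum_univ_three, Matrix.vecHead, Matrix.vecTail, Function.comp] <;> ring
  -- step 3
  have S3 : SameDC
      !![α 0 0, (α 1 0 * α 0 1 - α 1 1 * α 0 0), (α 1 0 * α 0 2 - α 1 2 * α 0 0); α 1 0, 0, 0; α 2 0, (α 1 0 * α 2 1 - α 1 1 * α 2 0), (α 1 0 * α 2 2 - α 1 2 * α 2 0)]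
      !![((α 1 0 * α 2 2 - α 1 2 * α 2 0) * α 0 0 - (α 1 0 * α 0 2 - α 1 2 * α 0 0) * α 2 0), ((α 1 0 * α 2 2 - α 1 2 * α 2 0) * (α 1 0 * α 0 1 - α 1 1 * α 0 0) - (α 1 0 * α 0 2 - α 1 2 * α 0 0) * (α 1 0 * α 2 1 - α 1 1 * α 2 0)), 0; α 1 0, 0, 0; α 2 0, (α 1 0 * α 2 1 - α 1 1 * α 2 0), (α 1 0 * α 2 2 - α 1 2 * α 2 0)] := by
    refine ⟨!![(α 1 0 * α 2 2 - α 1 2 * α 2 0), 0, -((α 1 0 * α 0 2 - α 1 2 * α 0 0)); 0, 1, 0; 0, 0, 1], 1,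
      isUT_fin3 (by simpa using huq22), isUT_one, ?_⟩
    rw [Matrix.mul_one]
    ext r s
    fin_cases r <;> fin_cases s <;>
      simp [Matrix.mul_apply, Fin.sum_univ_three, Matrix.vecHead, Matrix.vecTail, Function.comp] <;> ring
  -- step 4
  have S4 : SameDC
      !![((α 1 0 * α 2 2 - α 1 2 * α 2 0) * α 0 0 - (α 1 0 * α 0 2 - α 1 2 * α 0 0) * α 2 0), ((α 1 0 * α 2 2 - α 1 2 * α 2 0) * (α 1 0 * α 0 1 - α 1 1 * α 0 0) - (α 1 0 * α 0 2 - α 1 2 * α 0 0) * (α 1 0 * α 2 1 - α 1 1 * α 2 0)), 0; α 1 0, 0, 0; α 2 0, (α 1 0 * α 2 1 - α 1 1 * α 2 0), (α 1 0 * α 2 2 - α 1 2 * α 2 0)]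
      !![0, (α 1 0 * ((α 1 0 * α 2 2 - α 1 2 * α 2 0) * (α 1 0 * α 0 1 - α 1 1 * α 0 0) - (α 1 0 * α 0 2 - α 1 2 * α 0 0) * (α 1 0 * α 2 1 - α 1 1 * α 2 0))), 0; α 1 0, 0, 0; α 2 0, (α 1 0 * α 2 1 - α 1 1 * α 2 0), (α 1 0 * α 2 2 - α 1 2 * α 2 0)] := by
    refine ⟨!![α 1 0, -(((α 1 0 * α 2 2 - α 1 2 * α 2 0) * α 0 0 - (α 1 0 * α 0 2 - α 1 2 * α 0 0) * α 2 0)), 0; 0, 1, 0; 0, 0, 1], 1,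
      isUT_fin3 (by simpa using hu10), isUT_one, ?_⟩
    rw [Matrix.mul_one]
    ext r s
    fin_cases r <;> fin_cases s <;>
      simp [Matrix.mul_apply, Fin.sum_univ_three, Matrix.vecHead, Matrix.vecTail, Function.comp] <;> ring
  -- step 5 : scaling
  have S5 : SameDC
      !![0, (α 1 0 * ((α 1 0 * α 2 2 - α 1 2 * α 2 0) * (α 1 0 * α 0 1 - α 1 1 * α 0 0) - (α 1 0 * α 0 2 - α 1 2 * α 0 0) * (α 1 0 * α 2 1 - α 1 1 * α 2 0))), 0; α 1 0, 0, 0; α 2 0, (α 1 0 * α 2 1 - α 1 1 * α 2 0), (α 1 0 * α 2 2 - α 1 2 * α 2 0)]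
      !![0, 1, 0; 1, 0, 0; π ^ i, π ^ j, 1] := by
    refine ⟨!![s01inv * δ * q22inv, 0, 0; 0, u10inv * ε * q22inv, 0; 0, 0, q22inv],
      !![(α 1 0 * α 2 2 - α 1 2 * α 2 0) * εinv, 0, 0; 0, (α 1 0 * α 2 2 - α 1 2 * α 2 0) * δinv, 0; 0, 0, 1],
      isUT_fin3 (((((inv_unit hs01inv).mul hδ).mul (inv_unit hq22inv)).mul
        (((inv_unit hu10inv).mul hε).mul (inv_unit hq22inv))).mul (inv_unit hq22inv)),
      isUT_fin3 (((huq22.mul (inv_unit hεinv)).mul (huq22.mul (inv_unit hδinv))).mul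
        isUnit_one), ?_⟩
    ext r s
    fin_cases r <;> fin_cases s <;>
      simp [Matrix.mul_apply, Fin.sum_univ_three, Matrix.vecHead, Matrix.vecTail, Function.comp]
    · linear_combination (δ * δinv * (α 1 0 * α 2 2 - α 1 2 * α 2 0) * q22inv) * hs01inv
        + ((α 1 0 * α 2 2 - α 1 2 * α 2 0) * q22inv) * hδinv + hq22inv
    · linear_combination (ε * εinv * (α 1 0 * α 2 2 - α 1 2 * α 2 0) * q22inv) * hu10inv
        + ((α 1 0 * α 2 2 - α 1 2 * α 2 0) * q22inv) * hεinv + hq22inv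
    · linear_combination (q22inv * (α 1 0 * α 2 2 - α 1 2 * α 2 0) * εinv) * ha20
        + (π ^ i * ε * εinv) * hq22inv + π ^ i * hεinv
    · linear_combination (q22inv * (α 1 0 * α 2 2 - α 1 2 * α 2 0) * δinv) * hp21
        + (π ^ j * δ * δinv) * hq22inv + π ^ j * hδinv
    · linear_combination hq22inv
  exact sameDC_trans S1 (sameDC_trans S2 (sameDC_trans S3 (sameDC_trans S4 S5)))
end

section
/- Let A be a commutative local principal ideal ring with maximal ideal (π) of length k, and let M₂^• denote the set of 2×2 matrices over A whose top-right entry is a unit and whose other three entries lie in (π) and are non-units. Then every matrix in M₂^• can be transformed, by left and right multiplication by invertible upper triangular 2×2 matrices, into a matrix of the form [[π^i, u],[π^j b, π^l]] where u is a unit, b is a unit or zero, and the valuations satisfy i ≤ j and l ≤ j (standard form). -/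
open Matrix

lemma exists_rep {A : Type*} [CommRing A] [IsLocalRing A] (π : A) (k : ℕ)
    (hmax : IsLocalRing.maximalIdeal A = Ideal.span {π}) (hk0 : π ^ k = 0)
    (a : A) : ∃ n w, n ≤ k ∧ IsUnit w ∧ a = π ^ n * w := by
  suffices h : ∀ d c a, a = π ^ (k - d) * c → ∃ n w, n ≤ k ∧ IsUnit w ∧ a = π ^ n * w by
    exact h k a a (by simp)
  intro d
  induction d with
  | zero =>
    intro c a h
    refine ⟨k, 1, le_rfl, isUnit_one, ?_⟩
    rw [h]; simp [hk0]
  | succ d ih =>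
    intro c a h
    by_cases hu : IsUnit c
    · exact ⟨k - (d+1), c, Nat.sub_le _ _, hu, h⟩
    · have hc : c ∈ Ideal.span {π} := by
        rw [← hmax]; exact (IsLocalRing.mem_maximalIdeal _).2 hu
      obtain ⟨c', hc'⟩ := Ideal.mem_span_singleton'.mp hc
      by_cases hd : d + 1 ≤ k
      · apply ih c' a
        rw [h, ← hc']
        have hkd : k - d = (k - (d+1)) + 1 := by omega
        rw [hkd, pow_succ]; ring
      · apply ih c a
        rw [h]
        congr 2
        omega

lemma unit_add_nonunit {A : Type*} [CommRing A] [IsLocalRing A] {x y : A}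
    (hx : IsUnit x) (hy : ¬IsUnit y) : IsUnit (x + y) := by
  by_contra h
  have h2 : (x + y) + (-y) ∈ nonunits A :=
    IsLocalRing.nonunits_add h (fun hu => hy (by simpa using hu.neg))
  simp only [add_neg_cancel_right] at h2
  exact h2 hx

lemma nonunit_mul {A : Type*} [CommRing A] {x : A} (y : A) (hx : ¬IsUnit x) :
    ¬IsUnit (x * y) := fun h => hx (isUnit_of_mul_isUnit_left h)

lemma nonunit_add {A : Type*} [CommRing A] [IsLocalRing A] {x y : A}
    (hx : ¬IsUnit x) (hy : ¬IsUnit y) : ¬IsUnit (x + y) :=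
  IsLocalRing.nonunits_add hx hy

lemma isUT_mk {A : Type*} [CommRing A] (p q r : A) (hp : IsUnit p) (hr : IsUnit r) :
    IsUT !![p, q; 0, r] := by
  constructor
  · intro i j hij
    fin_cases i <;> fin_cases j <;> simp_all
  · rw [Matrix.isUnit_iff_isUnit_det, Matrix.det_fin_two_of]
    simpa using hp.mul hr

theorem stmt14 {A : Type*} [CommRing A] [IsLocalRing A] [IsPrincipalIdealRing A]
    (π : A) (k : ℕ) (hmax : IsLocalRing.maximalIdeal A = Ideal.span {π})
    (hk0 : π ^ k = 0) (hk1 : π ^ (k - 1) ≠ 0)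
    (M : Matrix (Fin 2) (Fin 2) A) (h01 : IsUnit (M 0 1))
    (h00 : M 0 0 ∈ Ideal.span {π} ∧ ¬IsUnit (M 0 0))
    (h10 : M 1 0 ∈ Ideal.span {π} ∧ ¬IsUnit (M 1 0))
    (h11 : M 1 1 ∈ Ideal.span {π} ∧ ¬IsUnit (M 1 1)) :
    ∃ X Y : Matrix (Fin 2) (Fin 2) A, IsUT X ∧ IsUT Y ∧
      ∃ (i j l : ℕ) (u b : A), IsUnit u ∧ (IsUnit b ∨ b = 0) ∧ i ≤ j ∧ l ≤ j ∧
        X * M * Y = !![π ^ i, u; π ^ j * b, π ^ l] := by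
  -- π itself is a nonunit
  have hπ : ¬IsUnit π := by
    intro h
    have : Ideal.span {π} = ⊤ := Ideal.eq_top_of_isUnit_mem _ (Ideal.mem_span_singleton_self π) h
    exact (IsLocalRing.maximalIdeal.isMaximal A).ne_top (hmax.trans this)
  have hπpow : ∀ m : ℕ, 1 ≤ m → ¬IsUnit (π ^ m) := by
    intro m hm h
    exact hπ (isUnit_of_mul_isUnit_left (show IsUnit (π * π ^ (m-1)) by
      rwa [← pow_succ', show m - 1 + 1 = m by omega]))
  obtain ⟨i0, wa, hi0k, hwa, ha⟩ := exists_rep π k hmax hk0 (M 0 0)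
  obtain ⟨j, b, hjk, hb, hc⟩ := exists_rep π k hmax hk0 (M 1 0)
  obtain ⟨l0, wd, hl0k, hwd, hd⟩ := exists_rep π k hmax hk0 (M 1 1)
  have hi01 : 1 ≤ i0 := by
    by_contra h
    exact h00.2 (by rw [ha, show i0 = 0 by omega, pow_zero, one_mul]; exact hwa)
  have hj1 : 1 ≤ j := by
    by_contra h
    exact h10.2 (by rw [hc, show j = 0 by omega, pow_zero, one_mul]; exact hb)
  have hl01 : 1 ≤ l0 := by
    by_contra h
    exact h11.2 (by rw [hd, show l0 = 0 by omega, pow_zero, one_mul]; exact hwd)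
  -- key 1 : row operation data
  have key1 : ∃ s e i, IsUnit e ∧ 1 ≤ i ∧ i ≤ j ∧ e * (M 0 0 + s * M 1 0) = π ^ i := by
    by_cases hij : i0 ≤ j
    · obtain ⟨W, rfl⟩ := hwa
      refine ⟨0, ↑W⁻¹, i0, Units.isUnit _, hi01, hij, ?_⟩
      rw [ha, zero_mul, add_zero, mul_comm (π ^ i0) (W : A), ← mul_assoc,
        Units.inv_mul, one_mul]
    · obtain ⟨W, rfl⟩ := hwa
      obtain ⟨B, rfl⟩ := hb
      have hnu : ¬IsUnit (π ^ (i0 - j) * ↑W) := nonunit_mul _ (hπpow _ (by omega))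
      have hun : IsUnit (1 + π ^ (i0 - j) * ↑W) := unit_add_nonunit isUnit_one hnu
      obtain ⟨E, hE⟩ := hun
      refine ⟨↑B⁻¹, ↑E⁻¹, j, Units.isUnit _, hj1, le_rfl, ?_⟩
      have hsum : M 0 0 + ↑B⁻¹ * M 1 0 = π ^ j * (1 + π ^ (i0 - j) * ↑W) := by
        rw [ha, hc]
        have : π ^ i0 = π ^ j * π ^ (i0 - j) := by
          rw [← pow_add]; congr 1; omega
        rw [this]
        rw [mul_left_comm (↑B⁻¹ : A), Units.inv_mul, mul_one]
        ring
      rw [hsum, ← hE]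
      calc (↑E⁻¹ : A) * (π ^ j * ↑E) = π ^ j * (↑E⁻¹ * ↑E) := by ring
        _ = π ^ j := by simp
  -- key 2 : column operation data
  have key2 : ∃ t f l, IsUnit f ∧ l ≤ j ∧ f * (M 1 1 + t * M 1 0) = π ^ l := by
    by_cases hlj : l0 ≤ j
    · obtain ⟨W, rfl⟩ := hwd
      refine ⟨0, ↑W⁻¹, l0, Units.isUnit _, hlj, ?_⟩
      rw [hd, zero_mul, add_zero, mul_comm (π ^ l0) (W : A), ← mul_assoc,
        Units.inv_mul, one_mul]
    · obtain ⟨W, rfl⟩ := hwd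
      obtain ⟨B, rfl⟩ := hb
      have hnu : ¬IsUnit (π ^ (l0 - j) * ↑W) := nonunit_mul _ (hπpow _ (by omega))
      have hun : IsUnit (1 + π ^ (l0 - j) * ↑W) := unit_add_nonunit isUnit_one hnu
      obtain ⟨E, hE⟩ := hun
      refine ⟨↑B⁻¹, ↑E⁻¹, j, Units.isUnit _, le_rfl, ?_⟩
      have hsum : M 1 1 + ↑B⁻¹ * M 1 0 = π ^ j * (1 + π ^ (l0 - j) * ↑W) := by
        rw [hd, hc]
        have : π ^ l0 = π ^ j * π ^ (l0 - j) := by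
          rw [← pow_add]; congr 1; omega
        rw [this]
        rw [mul_left_comm (↑B⁻¹ : A), Units.inv_mul, mul_one]
        ring
      rw [hsum, ← hE]
      calc (↑E⁻¹ : A) * (π ^ j * ↑E) = π ^ j * (↑E⁻¹ * ↑E) := by ring
        _ = π ^ j := by simp
  obtain ⟨s, e, i, he, hi1, hij, hkey1⟩ := key1
  obtain ⟨t, f, l, hf, hlj, hkey2⟩ := key2
  refine ⟨!![e, e*s; 0, 1], !![1, t*f; 0, f], isUT_mk _ _ _ he isUnit_one,
    isUT_mk _ _ _ isUnit_one hf, i, j, l,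
    (e * M 0 0 + e * s * M 1 0) * (t * f) + (e * M 0 1 + e * s * M 1 1) * f, b, ?_, Or.inl hb,
    hij, hlj, ?_⟩
  · -- the top-right entry is a unit
    have hrw : (e * M 0 0 + e * s * M 1 0) * (t * f) + (e * M 0 1 + e * s * M 1 1) * f
        = f * (e * M 0 1 + (π ^ i * t + e * s * M 1 1)) := by
      rw [← hkey1]; ring
    rw [hrw]
    exact hf.mul (unit_add_nonunit (he.mul h01)
      (nonunit_add (nonunit_mul t (hπpow i hi1))
        (by rw [show e * s * M 1 1 = M 1 1 * (e * s) by ring]; exact nonunit_mul _ h11.2)))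
  · -- the matrix identity
    rw [Matrix.eta_fin_two M]
    ext x y
    fin_cases x <;> fin_cases y <;>
        simp [Matrix.mul_apply, Fin.sum_univ_two] <;>
      first
        | exact hc
        | linear_combination hkey1
        | linear_combination hkey2
        | ring
end

section
/- Let A be a commutative local principal ideal ring of finite length k with finite residue field, and let B_n(A) ⊆ GL_n(A) denote the invertible upper triangular matrices. Suppose n = n₁ + n₂ with n₁, n₂ ≥ 1, and let w₁, w₂ be permutation matrices of sizes n₁ and n₂. Let w = [[0, w₁],[w₂, 0]] and, for a permutation matrix u of size m, let N(u) denote the number of double cosets in B_m(A)\GL_m(A)/B_m(A) whose image in B(𝐤)\GL_m(𝐤)/B(𝐤) corresponds to u under Bruhat decomposition. Then N(w) ≥ N(w₂). -/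
open Matrix

/-- `N(u)`: the number of double cosets in `B \ GLₘ(A) / B` whose image modulo the
maximal ideal lies in the double coset of the matrix `u` over the residue field. -/
noncomputable def overCount (A : Type*) [CommRing A] [IsLocalRing A] {m : ℕ}
    (u : Matrix (Fin m) (Fin m) (A ⧸ IsLocalRing.maximalIdeal A)) : ℕ :=
  Nat.card (Quot (fun x y : {M : Matrix (Fin m) (Fin m) A // IsUnit M ∧
    SameDC (M.map (Ideal.Quotient.mk (IsLocalRing.maximalIdeal A))) u} =>
      SameDC x.1 y.1))

namespace Stmt15Aux

variable {R : Type*} [CommRing R]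

theorem isUT_one {n : ℕ} : IsUT (1 : Matrix (Fin n) (Fin n) R) :=
  ⟨Matrix.blockTriangular_one, isUnit_one⟩

theorem isUT_mul {n : ℕ} {a b : Matrix (Fin n) (Fin n) R} (ha : IsUT a) (hb : IsUT b) :
    IsUT (a * b) := ⟨ha.1.mul hb.1, ha.2.mul hb.2⟩

theorem isUT_inv {n : ℕ} {a : Matrix (Fin n) (Fin n) R} (ha : IsUT a) : IsUT a⁻¹ := by
  have hdet : IsUnit a.det := (Matrix.isUnit_iff_isUnit_det _).mp ha.2
  haveI := a.invertibleOfIsUnitDet hdet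
  exact ⟨Matrix.blockTriangular_inv_of_blockTriangular ha.1,
    Matrix.isUnit_nonsing_inv_iff.mpr ha.2⟩

theorem sameDC_refl {n : ℕ} (α : Matrix (Fin n) (Fin n) R) : SameDC α α :=
  ⟨1, 1, isUT_one, isUT_one, by simp⟩

theorem sameDC_symm {n : ℕ} {α β : Matrix (Fin n) (Fin n) R} (h : SameDC α β) : SameDC β α := by
  obtain ⟨b, c, hb, hc, habc⟩ := h
  have hbd : IsUnit b.det := (Matrix.isUnit_iff_isUnit_det _).mp hb.2
  have hcd : IsUnit c.det := (Matrix.isUnit_iff_isUnit_det _).mp hc.2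
  refine ⟨b⁻¹, c⁻¹, isUT_inv hb, isUT_inv hc, ?_⟩
  rw [← habc]
  calc b⁻¹ * (b * α * c) * c⁻¹ = (b⁻¹ * b) * (α * (c * c⁻¹)) := by
        simp only [Matrix.mul_assoc]
    _ = α := by rw [Matrix.nonsing_inv_mul _ hbd, Matrix.mul_nonsing_inv _ hcd]; simp

theorem sameDC_trans {n : ℕ} {α β γ : Matrix (Fin n) (Fin n) R}
    (h1 : SameDC α β) (h2 : SameDC β γ) : SameDC α γ := by
  obtain ⟨b, c, hb, hc, h1⟩ := h1
  obtain ⟨b', c', hb', hc', h2⟩ := h2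
  refine ⟨b' * b, c * c', isUT_mul hb' hb, isUT_mul hc hc', ?_⟩
  rw [← h2, ← h1]
  simp only [Matrix.mul_assoc]

section Blocks

variable {n₁ n₂ : ℕ}

abbrev eqL (n₁ n₂ : ℕ) : Fin n₁ ⊕ Fin n₂ ≃ Fin (n₁ + n₂) := finSumFinEquiv

abbrev eqR (n₁ n₂ : ℕ) : Fin n₂ ⊕ Fin n₁ ≃ Fin (n₁ + n₂) :=
  finSumFinEquiv.trans (finCongr (Nat.add_comm n₂ n₁))

theorem blk_def (X₁ : Matrix (Fin n₁) (Fin n₂) R) (α₁ : Matrix (Fin n₁) (Fin n₁) R)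
    (α₂ : Matrix (Fin n₂) (Fin n₂) R) (X₂ : Matrix (Fin n₂) (Fin n₁) R) :
    blk X₁ α₁ α₂ X₂
      = (Matrix.fromBlocks X₁ α₁ α₂ X₂).submatrix (eqL n₁ n₂).symm (eqR n₁ n₂).symm := rfl

theorem eqL_inl (a : Fin n₁) : ((eqL n₁ n₂) (Sum.inl a) : ℕ) = a := by simp
theorem eqL_inr (a : Fin n₂) : ((eqL n₁ n₂) (Sum.inr a) : ℕ) = n₁ + a := by simp
theorem eqR_inl (a : Fin n₂) : ((eqR n₁ n₂) (Sum.inl a) : ℕ) = a := by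
  simp [eqR, finSumFinEquiv_apply_left]
theorem eqR_inr (a : Fin n₁) : ((eqR n₁ n₂) (Sum.inr a) : ℕ) = n₂ + a := by
  simp [eqR, finSumFinEquiv_apply_right]; omega

theorem isUT_reindex_diag {a b c : ℕ} (f : Fin a ⊕ Fin b ≃ Fin c)
    (hl : ∀ x : Fin a, ((f (Sum.inl x)) : ℕ) = x)
    (hr : ∀ y : Fin b, ((f (Sum.inr y)) : ℕ) = a + y)
    {P : Matrix (Fin a) (Fin a) R} {Q : Matrix (Fin b) (Fin b) R}
    (hP : IsUT P) (hQ : IsUT Q) :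
    IsUT ((Matrix.fromBlocks P 0 0 Q).submatrix f.symm f.symm) := by
  constructor
  · intro i j hij
    have hij' : (j : ℕ) < (i : ℕ) := hij
    rcases hsi : f.symm i with x | x <;> rcases hsj : f.symm j with y | y <;>
      have hi := congrArg (fun z => ((f z : Fin c) : ℕ)) hsi <;>
      have hj := congrArg (fun z => ((f z : Fin c) : ℕ)) hsj <;>
      simp only [Equiv.apply_symm_apply] at hi hj <;>
      simp only [Matrix.submatrix_apply, hsi, hsj, Matrix.fromBlocks_apply₁₁,
        Matrix.fromBlocks_apply₁₂, Matrix.fromBlocks_apply₂₁, Matrix.fromBlocks_apply₂₂,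
        Matrix.zero_apply]
    · refine hP.1 ?_
      have : (y : ℕ) < (x : ℕ) := by rw [hl x] at hi; rw [hl y] at hj; omega
      exact this
    · refine hQ.1 ?_
      have : (y : ℕ) < (x : ℕ) := by rw [hr x] at hi; rw [hr y] at hj; omega
      exact this
  · rw [Matrix.isUnit_iff_isUnit_det, Matrix.det_submatrix_equiv_self,
      Matrix.det_fromBlocks_zero₂₁]
    exact ((Matrix.isUnit_iff_isUnit_det _).mp hP.2).mul
      ((Matrix.isUnit_iff_isUnit_det _).mp hQ.2)

theorem isUT_L {P : Matrix (Fin n₁) (Fin n₁) R} {Q : Matrix (Fin n₂) (Fin n₂) R}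
    (hP : IsUT P) (hQ : IsUT Q) :
    IsUT ((Matrix.fromBlocks P 0 0 Q).submatrix (eqL n₁ n₂).symm (eqL n₁ n₂).symm) :=
  isUT_reindex_diag _ (fun x => eqL_inl x) (fun y => eqL_inr y) hP hQ

theorem isUT_R {P : Matrix (Fin n₂) (Fin n₂) R} {Q : Matrix (Fin n₁) (Fin n₁) R}
    (hP : IsUT P) (hQ : IsUT Q) :
    IsUT ((Matrix.fromBlocks P 0 0 Q).submatrix (eqR n₁ n₂).symm (eqR n₁ n₂).symm) :=
  isUT_reindex_diag _ (fun x => eqR_inl x) (fun y => eqR_inr y) hP hQ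

theorem L_mul_blk (P : Matrix (Fin n₁) (Fin n₁) R) (Q : Matrix (Fin n₂) (Fin n₂) R)
    (X₁ : Matrix (Fin n₁) (Fin n₂) R) (α₁ : Matrix (Fin n₁) (Fin n₁) R)
    (α₂ : Matrix (Fin n₂) (Fin n₂) R) (X₂ : Matrix (Fin n₂) (Fin n₁) R) :
    (Matrix.fromBlocks P 0 0 Q).submatrix (eqL n₁ n₂).symm (eqL n₁ n₂).symm
        * blk X₁ α₁ α₂ X₂ = blk (P * X₁) (P * α₁) (Q * α₂) (Q * X₂) := by
  rw [blk_def, blk_def, Matrix.submatrix_mul_equiv, Matrix.fromBlocks_multiply]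
  simp

theorem blk_mul_R (X₁ : Matrix (Fin n₁) (Fin n₂) R) (α₁ : Matrix (Fin n₁) (Fin n₁) R)
    (α₂ : Matrix (Fin n₂) (Fin n₂) R) (X₂ : Matrix (Fin n₂) (Fin n₁) R)
    (P : Matrix (Fin n₂) (Fin n₂) R) (Q : Matrix (Fin n₁) (Fin n₁) R) :
    blk X₁ α₁ α₂ X₂
        * (Matrix.fromBlocks P 0 0 Q).submatrix (eqR n₁ n₂).symm (eqR n₁ n₂).symm
      = blk (X₁ * P) (α₁ * Q) (α₂ * P) (X₂ * Q) := by
  rw [blk_def, blk_def, Matrix.submatrix_mul_equiv, Matrix.fromBlocks_multiply]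
  simp

end Blocks


section Blocks2

variable {n₁ n₂ : ℕ}

theorem blk_map {S : Type*} [CommRing S] (f : R →+* S)
    (X₁ : Matrix (Fin n₁) (Fin n₂) R) (α₁ : Matrix (Fin n₁) (Fin n₁) R)
    (α₂ : Matrix (Fin n₂) (Fin n₂) R) (X₂ : Matrix (Fin n₂) (Fin n₁) R) :
    (blk X₁ α₁ α₂ X₂).map f = blk (X₁.map f) (α₁.map f) (α₂.map f) (X₂.map f) := by
  rw [blk_def, blk_def, ← Matrix.submatrix_map, Matrix.fromBlocks_map]

theorem isUnit_blk_swap : IsUnit (blk (0 : Matrix (Fin n₁) (Fin n₂) R) 1 1 0) := by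
  refine ⟨⟨blk 0 1 1 0,
    (Matrix.fromBlocks (0 : Matrix (Fin n₂) (Fin n₁) R) 1 1 0).submatrix
      (eqR n₁ n₂).symm (eqL n₁ n₂).symm, ?_, ?_⟩, rfl⟩
  · rw [blk_def, Matrix.submatrix_mul_equiv, Matrix.fromBlocks_multiply]
    simp [Matrix.fromBlocks_one]
  · rw [blk_def, Matrix.submatrix_mul_equiv, Matrix.fromBlocks_multiply]
    simp [Matrix.fromBlocks_one]
    exact Matrix.submatrix_one_equiv (eqR n₁ n₂).symm

theorem isUnit_blk {W : Matrix (Fin n₁) (Fin n₁) R} {M : Matrix (Fin n₂) (Fin n₂) R}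
    (hW : IsUnit W) (hM : IsUnit M) : IsUnit (blk 0 W M 0) := by
  have h1 : IsUnit ((Matrix.fromBlocks W 0 0 M).submatrix (eqL n₁ n₂).symm (eqL n₁ n₂).symm) := by
    rw [Matrix.isUnit_iff_isUnit_det, Matrix.det_submatrix_equiv_self,
      Matrix.det_fromBlocks_zero₂₁]
    exact ((Matrix.isUnit_iff_isUnit_det _).mp hW).mul ((Matrix.isUnit_iff_isUnit_det _).mp hM)
  have h2 : (Matrix.fromBlocks W 0 0 M).submatrix (eqL n₁ n₂).symm (eqL n₁ n₂).symm
      * blk 0 1 1 0 = blk 0 W M 0 := by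
    rw [L_mul_blk]; simp
  rw [← h2]
  exact h1.mul isUnit_blk_swap

theorem sameDC_blk {W : Matrix (Fin n₁) (Fin n₁) R} {M M' : Matrix (Fin n₂) (Fin n₂) R}
    (h : SameDC M M') : SameDC (blk 0 W M 0) (blk 0 W M' 0) := by
  obtain ⟨b, c, hb, hc, hbc⟩ := h
  refine ⟨(Matrix.fromBlocks 1 0 0 b).submatrix (eqL n₁ n₂).symm (eqL n₁ n₂).symm,
          (Matrix.fromBlocks c 0 0 1).submatrix (eqR n₁ n₂).symm (eqR n₁ n₂).symm,
          isUT_L isUT_one hb, isUT_R hc isUT_one, ?_⟩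
  rw [L_mul_blk, blk_mul_R]
  simp only [Matrix.mul_zero, Matrix.zero_mul, Matrix.one_mul, Matrix.mul_one]
  rw [hbc]

theorem sameDC_of_blk {W W' : Matrix (Fin n₁) (Fin n₁) R} {M M' : Matrix (Fin n₂) (Fin n₂) R}
    (h : SameDC (blk 0 W M 0) (blk 0 W' M' 0)) : SameDC M M' := by
  obtain ⟨B, C, hB, hC, hBC⟩ := h
  set f := eqL n₁ n₂ with hf
  set g := eqR n₁ n₂ with hg
  set bb := B.submatrix f f with hbb
  set cc := C.submatrix g g with hcc
  have hBeq : B = bb.submatrix f.symm f.symm := by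
    rw [hbb, Matrix.submatrix_submatrix]
    simp only [Function.comp_def, Equiv.apply_symm_apply]
    exact rfl
  have hCeq : C = cc.submatrix g.symm g.symm := by
    rw [hcc, Matrix.submatrix_submatrix]
    simp only [Function.comp_def, Equiv.apply_symm_apply]
    exact rfl
  have key : bb * Matrix.fromBlocks 0 W M 0 * cc = Matrix.fromBlocks 0 W' M' 0 := by
    rw [hBeq, hCeq, blk_def, blk_def] at hBC
    rw [Matrix.submatrix_mul_equiv, Matrix.submatrix_mul_equiv] at hBC
    have := congrArg (fun X : Matrix (Fin (n₁+n₂)) (Fin (n₁+n₂)) R => X.submatrix f g) hBC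
    ext i j
    simpa [Matrix.submatrix_submatrix, Function.comp_def, hf, hg] using
      congrFun (congrFun this i) j
  have hbb21 : bb.toBlocks₂₁ = 0 := by
    ext i j
    show B (f (Sum.inr i)) (f (Sum.inl j)) = 0
    refine hB.1 ?_
    show (f (Sum.inl j)) < (f (Sum.inr i))
    rw [Fin.lt_def, eqL_inl, eqL_inr]
    omega
  have hcc21 : cc.toBlocks₂₁ = 0 := by
    ext i j
    show C (g (Sum.inr i)) (g (Sum.inl j)) = 0
    refine hC.1 ?_
    show (g (Sum.inl j)) < (g (Sum.inr i))
    rw [Fin.lt_def, eqR_inl, eqR_inr]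
    omega
  have hbbF : bb = Matrix.fromBlocks bb.toBlocks₁₁ bb.toBlocks₁₂ 0 bb.toBlocks₂₂ := by
    rw [← hbb21, Matrix.fromBlocks_toBlocks]
  have hccF : cc = Matrix.fromBlocks cc.toBlocks₁₁ cc.toBlocks₁₂ 0 cc.toBlocks₂₂ := by
    rw [← hcc21, Matrix.fromBlocks_toBlocks]
  rw [hbbF, hccF, Matrix.fromBlocks_multiply, Matrix.fromBlocks_multiply] at key
  have h21 := congrArg Matrix.toBlocks₂₁ key
  simp only [Matrix.toBlocks_fromBlocks₂₁, Matrix.zero_mul, Matrix.mul_zero,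
    add_zero, zero_add] at h21
  have hdetB : IsUnit (bb.toBlocks₁₁.det * bb.toBlocks₂₂.det) := by
    rw [← Matrix.det_fromBlocks_zero₂₁, ← hbbF, hbb, Matrix.det_submatrix_equiv_self]
    exact (Matrix.isUnit_iff_isUnit_det _).mp hB.2
  have hdetC : IsUnit (cc.toBlocks₁₁.det * cc.toBlocks₂₂.det) := by
    rw [← Matrix.det_fromBlocks_zero₂₁, ← hccF, hcc, Matrix.det_submatrix_equiv_self]
    exact (Matrix.isUnit_iff_isUnit_det _).mp hC.2
  refine ⟨bb.toBlocks₂₂, cc.toBlocks₁₁, ⟨?_, ?_⟩, ⟨?_, ?_⟩, ?_⟩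
  · intro i j hij
    show B (f (Sum.inr i)) (f (Sum.inr j)) = 0
    refine hB.1 ?_
    show (f (Sum.inr j)) < (f (Sum.inr i))
    rw [Fin.lt_def, eqL_inr, eqL_inr]
    have : (j : ℕ) < (i : ℕ) := hij
    omega
  · rw [Matrix.isUnit_iff_isUnit_det]
    exact isUnit_of_mul_isUnit_right hdetB
  · intro i j hij
    show C (g (Sum.inl i)) (g (Sum.inl j)) = 0
    refine hC.1 ?_
    show (g (Sum.inl j)) < (g (Sum.inl i))
    rw [Fin.lt_def, eqR_inl, eqR_inl]
    exact hij
  · rw [Matrix.isUnit_iff_isUnit_det]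
    exact isUnit_of_mul_isUnit_left hdetC
  · exact h21

end Blocks2


theorem isUnit_permLike {n : ℕ} (σ : Equiv.Perm (Fin n)) :
    IsUnit (Matrix.of fun i j : Fin n => if σ j = i then (1 : R) else 0) := by
  have heq : (Matrix.of fun i j : Fin n => if σ j = i then (1 : R) else 0)
      = (σ⁻¹).permMatrix R := by
    ext i j
    show (if σ j = i then (1 : R) else 0) = _
    rw [Equiv.Perm.permMatrix, PEquiv.toMatrix_apply, Equiv.toPEquiv_apply]
    refine if_congr ?_ rfl rfl
    simp only [Option.mem_def, Option.some_inj]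
    exact ⟨fun h => by rw [← h, Equiv.Perm.inv_def, Equiv.symm_apply_apply],
      fun h => by rw [← h, Equiv.Perm.inv_def, Equiv.apply_symm_apply]⟩
  rw [heq, Matrix.isUnit_iff_isUnit_det, Matrix.det_permutation]
  exact IsUnit.of_mul_eq_one ((Equiv.Perm.sign σ⁻¹ : ℤ) : R) (by
    rw [← Int.cast_mul, ← Units.val_mul, Int.units_mul_self, Units.val_one, Int.cast_one])

theorem count_le {A : Type*} [CommRing A] [IsLocalRing A] [Finite A] {n₁ n₂ : ℕ}
    (W₁ : Matrix (Fin n₁) (Fin n₁) A) (hW : IsUnit W₁)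
    (u₂ : Matrix (Fin n₂) (Fin n₂) (A ⧸ IsLocalRing.maximalIdeal A)) :
    overCount A u₂ ≤ overCount A
      (blk 0 (W₁.map (Ideal.Quotient.mk (IsLocalRing.maximalIdeal A))) u₂ 0) := by
  classical
  set q : A →+* A ⧸ IsLocalRing.maximalIdeal A := Ideal.Quotient.mk _ with hq
  set u : Matrix (Fin (n₁+n₂)) (Fin (n₁+n₂)) (A ⧸ IsLocalRing.maximalIdeal A) :=
    blk 0 (W₁.map q) u₂ 0 with hu
  let T₂ := {M : Matrix (Fin n₂) (Fin n₂) A // IsUnit M ∧ SameDC (M.map q) u₂}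
  let Tw := {M : Matrix (Fin (n₁+n₂)) (Fin (n₁+n₂)) A // IsUnit M ∧ SameDC (M.map q) u}
  let r₂ : T₂ → T₂ → Prop := fun x y => SameDC x.1 y.1
  let rw' : Tw → Tw → Prop := fun x y => SameDC x.1 y.1
  have hmap : ∀ M : Matrix (Fin n₂) (Fin n₂) A,
      (blk 0 W₁ M 0).map q = blk 0 (W₁.map q) (M.map q) 0 := by
    intro M
    rw [blk_map]
    rw [Matrix.map_zero _ (map_zero q), Matrix.map_zero _ (map_zero q)]
  let F : T₂ → Tw := fun M => ⟨blk 0 W₁ M.1 0, isUnit_blk hW M.2.1, by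
    rw [hmap]; exact sameDC_blk M.2.2⟩
  have hresp : ∀ a b : T₂, r₂ a b → Quot.mk rw' (F a) = Quot.mk rw' (F b) := fun a b hab =>
    Quot.sound (sameDC_blk hab)
  let G : Quot r₂ → Quot rw' := Quot.lift (fun M => Quot.mk rw' (F M)) hresp
  have hequiv : Equivalence rw' :=
    ⟨fun x => sameDC_refl _, fun h => sameDC_symm h, fun h h' => sameDC_trans h h'⟩
  have hG : Function.Injective G := by
    intro x y
    induction x using Quot.ind with | _ a =>
    induction y using Quot.ind with | _ b =>
    intro hxy
    have h1 : rw' (F a) (F b) := hequiv.eqvGen_iff.mp (Quot.eqvGen_exact hxy)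
    exact Quot.sound (sameDC_of_blk h1)
  haveI : Finite Tw := Subtype.finite
  haveI : Finite (Quot rw') := Quot.finite rw'
  exact Nat.card_le_card_of_injective G hG


theorem finiteA {A : Type*} [CommRing A] [IsLocalRing A]
    [Finite (A ⧸ IsLocalRing.maximalIdeal A)]
    (π : A) (k : ℕ) (hmax : IsLocalRing.maximalIdeal A = Ideal.span {π})
    (hk0 : π ^ k = 0) : Finite A := by
  classical
  have hmk : Function.Surjective (Ideal.Quotient.mk (IsLocalRing.maximalIdeal A)) :=
    Ideal.Quotient.mk_surjective
  let t : (A ⧸ IsLocalRing.maximalIdeal A) → A := Function.surjInv hmk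
  have ht : ∀ x, Ideal.Quotient.mk (IsLocalRing.maximalIdeal A) (t x) = x :=
    fun x => Function.surjInv_eq hmk x
  have step : ∀ a : A, ∃ b : A,
      a = t (Ideal.Quotient.mk (IsLocalRing.maximalIdeal A) a) + π * b := by
    intro a
    have hmem : a - t (Ideal.Quotient.mk (IsLocalRing.maximalIdeal A) a)
        ∈ IsLocalRing.maximalIdeal A :=
      (Ideal.Quotient.eq).mp (ht (Ideal.Quotient.mk (IsLocalRing.maximalIdeal A) a)).symm
    have hmem2 : a - t (Ideal.Quotient.mk (IsLocalRing.maximalIdeal A) a)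
        ∈ Ideal.span {π} := by rw [← hmax]; exact hmem
    obtain ⟨b, hb⟩ := Ideal.mem_span_singleton.mp hmem2
    exact ⟨b, by linear_combination hb⟩
  have expand : ∀ (j : ℕ) (a : A), ∃ (c : Fin j → (A ⧸ IsLocalRing.maximalIdeal A)) (r : A),
      a = (∑ i, t (c i) * π ^ (i : ℕ)) + π ^ j * r := by
    intro j
    induction j with
    | zero => exact fun a => ⟨fun i => i.elim0, a, by simp⟩
    | succ j ih =>
      intro a
      obtain ⟨b, hb⟩ := step a
      obtain ⟨c, r, hc⟩ := ih b
      refine ⟨Fin.cons (Ideal.Quotient.mk (IsLocalRing.maximalIdeal A) a) c, r, ?_⟩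
      rw [Fin.sum_univ_succ]
      simp only [Fin.cons_zero, Fin.cons_succ, Fin.val_succ, Fin.val_zero, pow_zero, mul_one]
      have hsum : (π * ∑ i : Fin j, t (c i) * π ^ (i : ℕ))
          = ∑ i : Fin j, t (c i) * π ^ ((i : ℕ) + 1) := by
        rw [Finset.mul_sum]
        exact Finset.sum_congr rfl fun i _ => by ring
      refine hb.trans ?_
      rw [hc, mul_add, hsum]
      ring
  have hsurj : Function.Surjective
      (fun c : Fin k → (A ⧸ IsLocalRing.maximalIdeal A) => ∑ i, t (c i) * π ^ (i : ℕ)) := by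
    intro a
    obtain ⟨c, r, hc⟩ := expand k a
    exact ⟨c, by rw [hc, hk0, zero_mul, add_zero]⟩
  exact Finite.of_surjective _ hsurj

end Stmt15Aux

theorem stmt15 {A : Type*} [CommRing A] [IsLocalRing A] [IsPrincipalIdealRing A]
    (π : A) (k : ℕ) (hmax : IsLocalRing.maximalIdeal A = Ideal.span {π})
    (hk0 : π ^ k = 0) (hk1 : π ^ (k - 1) ≠ 0)
    [Finite (A ⧸ IsLocalRing.maximalIdeal A)]
    {n₁ n₂ : ℕ} (hn₁ : 1 ≤ n₁) (hn₂ : 1 ≤ n₂)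
    (σ₁ : Equiv.Perm (Fin n₁)) (σ₂ : Equiv.Perm (Fin n₂)) :
    overCount A (blk 0
        (Matrix.of fun i j : Fin n₁ =>
          if σ₁ j = i then (1 : A ⧸ IsLocalRing.maximalIdeal A) else 0)
        (Matrix.of fun i j : Fin n₂ =>
          if σ₂ j = i then (1 : A ⧸ IsLocalRing.maximalIdeal A) else 0) 0) ≥
      overCount A (Matrix.of fun i j : Fin n₂ =>
        if σ₂ j = i then (1 : A ⧸ IsLocalRing.maximalIdeal A) else 0) := by
  haveI : Finite A := Stmt15Aux.finiteA π k hmax hk0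
  have hmapW : (Matrix.of fun i j : Fin n₁ => if σ₁ j = i then (1 : A) else 0).map
      (Ideal.Quotient.mk (IsLocalRing.maximalIdeal A))
      = (Matrix.of fun i j : Fin n₁ =>
          if σ₁ j = i then (1 : A ⧸ IsLocalRing.maximalIdeal A) else 0) := by
    ext i j
    simp [Matrix.map_apply, apply_ite]
  have h := Stmt15Aux.count_le (A := A)
    (Matrix.of fun i j : Fin n₁ => if σ₁ j = i then (1 : A) else 0)
    (Stmt15Aux.isUnit_permLike σ₁)
    (Matrix.of fun i j : Fin n₂ =>
      if σ₂ j = i then (1 : A ⧸ IsLocalRing.maximalIdeal A) else 0)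
  rw [hmapW] at h
  exact h
end

section
/- Let A be a commutative local principal ideal ring of finite length k with maximal ideal (π), and suppose a, a' are units of A such that [[π^i,1],[π^{i+l}a, π^l]] and [[π^i,1],[π^{i+l}a', π^l]] (with k > i+l, i, l > 0) satisfy X·[[π^i,1],[π^{i+l}a,π^l]] = [[π^i,1],[π^{i+l}a',π^l]]·Y for some invertible upper triangular 2×2 matrices X, Y. Then min{k−i−l, v(a−1)} = min{k−i−l, v(a'−1)}. -/
open Matrix

lemma exists_unit_pow {A : Type*} [CommRing A] [IsLocalRing A] (π : A) (k : ℕ)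
    (hmax : IsLocalRing.maximalIdeal A = Ideal.span {π}) (hk0 : π ^ k = 0) (y : A) :
    ∃ u n, IsUnit u ∧ n ≤ k ∧ y = u * π ^ n := by
  by_cases hy : y = 0
  · exact ⟨1, k, isUnit_one, le_rfl, by simp [hy, hk0]⟩
  · set S : Set ℕ := {m | π ^ m ∣ y} with hS
    have hbdd : ∀ m ∈ S, m ≤ k := by
      intro m hm
      by_contra hmk
      push_neg at hmk
      have hz : π ^ m = 0 := by
        have : π ^ m = π ^ k * π ^ (m - k) := by
          rw [← pow_add]; congr 1; omega
        simp [this, hk0]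
      exact hy (zero_dvd_iff.mp (hz ▸ hm))
    have hne : S.Nonempty := ⟨0, by simp [hS]⟩
    have hBdd : BddAbove S := ⟨k, fun m hm => hbdd m hm⟩
    set n := sSup S with hn
    have hnS : n ∈ S := Nat.sSup_mem hne hBdd
    have hnk : n ≤ k := hbdd n hnS
    have hdvdy : π ^ n ∣ y := hnS
    obtain ⟨c, hc⟩ := hdvdy
    have hcu : IsUnit c := by
      by_contra hcu
      have : c ∈ IsLocalRing.maximalIdeal A := hcu
      rw [hmax, Ideal.mem_span_singleton] at this
      obtain ⟨d, hd⟩ := this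
      have : π ^ (n + 1) ∣ y := ⟨d, by rw [hc, hd]; ring⟩
      have := le_csSup hBdd (this : n + 1 ∈ S)
      omega
    exact ⟨c, n, hcu, hnk, by rw [hc]; ring⟩

lemma pval_unit_mul {A : Type*} [CommRing A] (π : A) (k : ℕ)
    (hk0 : π ^ k = 0) (hk1 : π ^ (k - 1) ≠ 0)
    {u : A} (hu : IsUnit u) (n : ℕ) :
    pval π k (u * π ^ n) = min k n := by
  have hset : {m : ℕ | m ≤ k ∧ π ^ m ∣ u * π ^ n} = Set.Iic (min k n) := by
    ext m
    simp only [Set.mem_setOf_eq, Set.mem_Iic, le_min_iff]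
    constructor
    · rintro ⟨hmk, hdvd⟩
      refine ⟨hmk, ?_⟩
      by_contra hnm
      push_neg at hnm
      have hdvd' : π ^ m ∣ π ^ n := hu.dvd_mul_left.mp hdvd
      obtain ⟨c, hc⟩ := hdvd'
      have hz : π ^ (k - 1) = π ^ (k - 1 - n) * π ^ n := by
        rw [← pow_add]; congr 1; omega
      rw [hc, ← mul_assoc, ← pow_add] at hz
      have : π ^ (k - 1 - n + m) = 0 := by
        have h1 : π ^ (k - 1 - n + m) = π ^ k * π ^ (k - 1 - n + m - k) := by
          rw [← pow_add]; congr 1; omega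
        simp [h1, hk0]
      rw [this, zero_mul] at hz
      exact hk1 hz
    · rintro ⟨hmk, hmn⟩
      exact ⟨hmk, (pow_dvd_pow π hmn).mul_left u⟩
  rw [pval, hset, csSup_Iic]

theorem stmt17 {A : Type*} [CommRing A] [IsLocalRing A] [IsPrincipalIdealRing A]
    (π : A) (k i l : ℕ) (hmax : IsLocalRing.maximalIdeal A = Ideal.span {π})
    (hk0 : π ^ k = 0) (hk1 : π ^ (k - 1) ≠ 0)
    (hil : i + l < k) (hi : 0 < i) (hl : 0 < l)
    (a a' : A) (ha : IsUnit a) (ha' : IsUnit a')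
    (h : ∃ X Y : Matrix (Fin 2) (Fin 2) A, IsUT X ∧ IsUT Y ∧
      X * !![π ^ i, 1; π ^ (i + l) * a, π ^ l] =
        !![π ^ i, 1; π ^ (i + l) * a', π ^ l] * Y) :
    min (k - i - l) (pval π k (a - 1)) = min (k - i - l) (pval π k (a' - 1)) := by
  obtain ⟨X, Y, hX, hY, heq⟩ := h
  have hXd : IsUnit X.det := (Matrix.isUnit_iff_isUnit_det X).mp hX.2
  have hYd : IsUnit Y.det := (Matrix.isUnit_iff_isUnit_det Y).mp hY.2
  obtain ⟨u, nA, hu, hnA, hA⟩ := exists_unit_pow π k hmax hk0 (a - 1)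
  obtain ⟨u', nA', hu', hnA', hA'⟩ := exists_unit_pow π k hmax hk0 (a' - 1)
  have hdet := congrArg Matrix.det heq
  rw [Matrix.det_mul, Matrix.det_mul, Matrix.det_fin_two_of, Matrix.det_fin_two_of] at hdet
  -- rewrite both determinants
  have key : (-(X.det * u)) * π ^ (i + l + nA) = (-(Y.det * u')) * π ^ (i + l + nA') := by
    have h1 : π ^ i * π ^ l - 1 * (π ^ (i + l) * a) = -(π ^ (i + l) * (a - 1)) := by
      rw [← pow_add]; ring
    have h2 : π ^ i * π ^ l - 1 * (π ^ (i + l) * a') = -(π ^ (i + l) * (a' - 1)) := by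
      rw [← pow_add]; ring
    rw [h1, h2, hA, hA'] at hdet
    calc (-(X.det * u)) * π ^ (i + l + nA)
        = X.det * -(π ^ (i + l) * (u * π ^ nA)) := by rw [pow_add]; ring
      _ = -(π ^ (i + l) * (u' * π ^ nA')) * Y.det := hdet
      _ = (-(Y.det * u')) * π ^ (i + l + nA') := by rw [pow_add]; ring
  have e1 : pval π k ((-(X.det * u)) * π ^ (i + l + nA)) = min k (i + l + nA) :=
    pval_unit_mul π k hk0 hk1 (hXd.mul hu).neg _
  have e2 : pval π k ((-(Y.det * u')) * π ^ (i + l + nA')) = min k (i + l + nA') :=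
    pval_unit_mul π k hk0 hk1 (hYd.mul hu').neg _
  have emin : min k (i + l + nA) = min k (i + l + nA') := by rw [← e1, ← e2, key]
  have p1 : pval π k (a - 1) = nA := by
    rw [hA, pval_unit_mul π k hk0 hk1 hu]; omega
  have p2 : pval π k (a' - 1) = nA' := by
    rw [hA', pval_unit_mul π k hk0 hk1 hu']; omega
  rw [p1, p2]
  omega
end
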